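/- arXiv:1611.09821 — 5 statements merged into one kernel-verified Lean document; each statement's English description precedes it below -/
import Mathlib

section
/- Let n ≥ 1 and 1 ≤ k ≤ n. If (π₂, …, πₙ) ∈ Sh(k−1, n−k), then (k, π₂, …, πₙ) is a parking function of size n. -/
/-- A parking function of size `n`, encoded as a list of length `n` with entries in
`{1, …, n}` such that for each `1 ≤ i ≤ n` at least `i` entries are `≤ i`. -/
def IsPFList (n : ℕ) (l : List ℕ) : Prop :=
  l.length = n ∧ (∀ x ∈ l, 1 ≤ x ∧ x ≤ n) ∧
  ∀ i : ℕ, 1 ≤ i → i ≤ n → i ≤ (l.filter (fun x => x ≤ i)).length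

/-- `Interleave a b c` : `c` is a shuffle (order-preserving interleaving) of `a` and `b`. -/
inductive Interleave : List ℕ → List ℕ → List ℕ → Prop
  | nil : Interleave [] [] []
  | left {x : ℕ} {a b c : List ℕ} : Interleave a b c → Interleave (x :: a) b (x :: c)
  | right {x : ℕ} {a b c : List ℕ} : Interleave a b c → Interleave a (x :: b) (x :: c)

/-- `w ∈ Sh(k-1, n-k)`: `w` is a shuffle of a parking function `α` of size `k-1` with a
parking function `β` of size `n-k` whose entries are each increased by `k-1`. -/
def InSh (n k : ℕ) (w : List ℕ) : Prop :=
  ∃ α β : List ℕ, IsPFList (k - 1) α ∧ IsPFList (n - k) β ∧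
    Interleave α (β.map (fun x => x + (k - 1))) w

lemma itl_mem {a b c : List ℕ} (h : Interleave a b c) :
    ∀ x ∈ c, x ∈ a ∨ x ∈ b := by
  induction h with
  | nil => simp
  | left h ih => intro x hx; rcases List.mem_cons.1 hx with h1 | h1
                 · simp [h1]
                 · rcases ih x h1 with h2 | h2 <;> simp [h2]
  | right h ih => intro x hx; rcases List.mem_cons.1 hx with h1 | h1
                  · simp [h1]
                  · rcases ih x h1 with h2 | h2 <;> simp [h2]

lemma itl_countP {a b c : List ℕ} (p : ℕ → Bool) (h : Interleave a b c) :
    c.countP p = a.countP p + b.countP p := by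
  induction h with
  | nil => simp
  | left h ih => simp [List.countP_cons, ih]; omega
  | right h ih => simp [List.countP_cons, ih]; omega

lemma itl_length {a b c : List ℕ} (h : Interleave a b c) :
    c.length = a.length + b.length := by
  induction h with
  | nil => simp
  | left h ih => simp [ih]; omega
  | right h ih => simp [ih]; omega

theorem stmt1 (n k : ℕ) (hn : 1 ≤ n) (hk : 1 ≤ k) (hkn : k ≤ n)
    (w : List ℕ) (hsh : InSh n k w) :
    IsPFList n (k :: w) := by
  obtain ⟨α, β, ⟨hαl, hαb, hαc⟩, ⟨hβl, hβb, hβc⟩, hil⟩ := hsh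
  have hwlen : w.length = (k - 1) + (n - k) := by
    rw [itl_length hil, List.length_map, hαl, hβl]
  refine ⟨by simp [hwlen]; omega, ?_, ?_⟩
  · intro x hx
    rcases List.mem_cons.1 hx with rfl | hx
    · omega
    · rcases itl_mem hil x hx with h | h
      · have := hαb x h; omega
      · obtain ⟨y, hy, rfl⟩ := List.mem_map.1 h
        have := hβb y hy; omega
  · intro i hi1 hin
    have hcnt : ∀ (l : List ℕ) (p : ℕ → Bool), (l.filter p).length = l.countP p := by
      intro l p; rw [List.countP_eq_length_filter]
    rw [hcnt]
    rw [List.countP_cons]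
    rw [itl_countP _ hil, List.countP_map]
    simp only [Function.comp_def]
    have hβ' : (β.countP fun y => decide (y + (k-1) ≤ i))
        = β.countP (fun y => decide (y ≤ i - (k-1))) := by
      apply List.countP_congr
      intro y hy
      have := hβb y hy
      simp only [decide_eq_true_eq]
      omega
    by_cases hik : i < k
    · have hαi := hαc i hi1 (by omega)
      rw [hcnt] at hαi
      rw [hβ']
      have h0 : β.countP (fun y => decide (y ≤ i - (k-1))) = 0 := by
        rw [List.countP_eq_zero]
        intro y hy
        have := hβb y hy
        simp; omega
      rw [if_neg (by simp; omega)]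
      omega
    · push_neg at hik
      have hαfull : α.countP (fun x => decide (x ≤ i)) = k - 1 := by
        rw [← hαl]
        apply List.countP_eq_length.2
        intro x hx
        have := hαb x hx
        simp; omega
      rw [hβ']
      by_cases hj : i - (k-1) ≤ n - k
      · have hβi := hβc (i - (k-1)) (by omega) hj
        rw [hcnt] at hβi
        rw [if_pos (decide_eq_true hik)]
        omega
      · have hβfull : β.countP (fun y => decide (y ≤ i - (k-1))) = n - k := by
          rw [← hβl]
          apply List.countP_eq_length.2
          intro x hx
          have := hβb x hx
          simp; omega
        rw [if_pos (decide_eq_true hik)]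
        omega
end

section
/- For every n ≥ 1 and every 1 ≤ k ≤ n, the number of parking functions π of size n with first coordinate π₁ = k equals ∑_{s=0}^{n−k} C(n−1, s) · (s+1)^{s−1} · (n−s)^{n−s−2}, where C(a,b) denotes the binomial coefficient. In particular this count is weakly decreasing in k. -/
open Finset

/-- count of entries ≤ i -/
def cntLe {n : ℕ} (f : Fin n → ℕ) (i : ℕ) : ℕ :=
  (Finset.univ.filter fun j => f j ≤ i).card

open scoped Classical in
/-- parking functions as functions, Finset version -/
noncomputable def pfFun (n : ℕ) : Finset (Fin n → ℕ) :=
  (Fintype.piFinset fun _ => Finset.Icc 1 n).filter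
    (fun f => ∀ i ∈ Finset.Icc 1 n, i ≤ cntLe f i)

noncomputable def pfHead (m k : ℕ) : Finset (Fin (m+1) → ℕ) :=
  (pfFun (m+1)).filter (fun f => f 0 = k)

lemma mem_pfFun {n : ℕ} {f : Fin n → ℕ} :
    f ∈ pfFun n ↔ (∀ j, 1 ≤ f j ∧ f j ≤ n) ∧ ∀ i, 1 ≤ i → i ≤ n → i ≤ cntLe f i := by
  classical
  simp only [pfFun, Finset.mem_filter, Fintype.mem_piFinset, Finset.mem_Icc]
  tauto

lemma mem_pfHead {m k : ℕ} {f : Fin (m+1) → ℕ} :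
    f ∈ pfHead m k ↔ f ∈ pfFun (m+1) ∧ f 0 = k := by
  classical
  simp [pfHead]

lemma length_filter_ofFn {n : ℕ} (f : Fin n → ℕ) (p : ℕ → Bool) :
    ((List.ofFn f).filter p).length = (Finset.univ.filter fun j => p (f j)).card := by
  induction n with
  | zero => simp
  | succ n ih =>
    rw [List.ofFn_succ, List.filter_cons, Finset.card_filter, Fin.sum_univ_succ,
      ← Finset.card_filter, ← ih (fun j => f j.succ)]
    by_cases h : p (f 0) <;> simp [h, Nat.add_comm]

lemma isPFList_ofFn {n : ℕ} (f : Fin n → ℕ) :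
    IsPFList n (List.ofFn f) ↔ f ∈ pfFun n := by
  rw [mem_pfFun]
  unfold IsPFList
  have hb : ∀ i : ℕ, ((List.ofFn f).filter (fun x => x ≤ i)).length = cntLe f i := by
    intro i
    rw [length_filter_ofFn f (fun x => x ≤ i)]
    unfold cntLe
    congr 1
    ext j
    simp
  constructor
  · rintro ⟨-, h2, h3⟩
    refine ⟨fun j => h2 (f j) (by simp only [List.mem_ofFn]; exact ⟨j, rfl⟩),
      fun i h1 h2' => ?_⟩
    rw [← hb i]; exact h3 i h1 h2'
  · rintro ⟨h2, h3⟩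
    refine ⟨by simp, ?_, ?_⟩
    · intro x hx
      simp only [List.mem_ofFn] at hx
      obtain ⟨j, rfl⟩ := hx
      exact h2 j
    · intro i h1 h2'
      rw [hb i]; exact h3 i h1 h2'

lemma ncard_eq_card_pfHead (m k : ℕ) :
    {l : List ℕ | IsPFList (m+1) l ∧ l.headI = k}.ncard = (pfHead m k).card := by
  classical
  have hset : {l : List ℕ | IsPFList (m+1) l ∧ l.headI = k}
      = ↑((pfHead m k).image List.ofFn) := by
    ext l
    simp only [Set.mem_setOf_eq, Finset.coe_image, Set.mem_image, Finset.mem_coe]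
    constructor
    · rintro ⟨h1, h2⟩
      have hl : l.length = m + 1 := h1.1
      set f : Fin (m+1) → ℕ := fun j => l.get (Fin.cast hl.symm j) with hf
      have hofn : List.ofFn f = l := by
        apply List.ext_getElem (by simp [hl])
        intro i hi hi2
        simp only [List.getElem_ofFn, hf, List.get_eq_getElem, Fin.coe_cast]
      refine ⟨f, ?_, hofn⟩
      rw [mem_pfHead, ← isPFList_ofFn, hofn]
      refine ⟨h1, ?_⟩
      have : (List.ofFn f).headI = f 0 := by rw [List.ofFn_succ]; rfl
      rw [← this, hofn, h2]
    · rintro ⟨f, hf, rfl⟩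
      rw [mem_pfHead, ← isPFList_ofFn] at hf
      refine ⟨hf.1, ?_⟩
      rw [← hf.2, List.ofFn_succ]; rfl
  rw [hset, Set.ncard_coe_finset,
    Finset.card_image_of_injective _ List.ofFn_injective]

/-! ### Pollak's argument: `(pfFun m).card = (m+1)^(m-1)` -/

section Pollak

variable {m : ℕ}

/-- cumulative count of values with `val < x` -/
def CC (f : Fin m → ZMod (m+1)) (x : ℕ) : ℕ :=
  (Finset.univ.filter fun j => (f j).val < x).card

open scoped Classical in
def Good (f : Fin m → ZMod (m+1)) (a : ZMod (m+1)) : Prop :=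
  ∀ w : ℕ, 1 ≤ w → w ≤ m+1 →
    (Finset.univ.filter fun j => (a - f j).val < w).card < w

lemma good_unique (f : Fin m → ZMod (m+1)) {a b : ZMod (m+1)}
    (ha : Good f a) (hb : Good f b) : a = b := by
  classical
  by_contra hne
  have hab : a - b ≠ 0 := sub_ne_zero.mpr hne
  have hw1 : 1 ≤ (a - b).val :=
    Nat.one_le_iff_ne_zero.2 (fun h => hab ((ZMod.val_eq_zero _).1 h))
  have hwq : (a - b).val < m + 1 := ZMod.val_lt _
  have hww' : (b - a).val = (m + 1) - (a - b).val := by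
    have hba : b - a = -(a - b) := by ring
    rw [hba, ZMod.neg_val, if_neg hab]
  have key : ∀ x : ZMod (m+1),
      ((a - x).val < (a - b).val ↔ ¬ ((b - x).val < (b - a).val)) := by
    intro x
    have h1 : b - x = (b - a) + (a - x) := by ring
    have h2 : (b - x).val = ((b - a).val + (a - x).val) % (m+1) := by
      rw [h1, ZMod.val_add]
    have hs : (a - x).val < m + 1 := ZMod.val_lt _
    rcases Nat.lt_or_ge ((a - x).val) ((a - b).val) with h | h
    · have h3 : ((b - a).val + (a - x).val) % (m+1) = (b - a).val + (a - x).val :=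
        Nat.mod_eq_of_lt (by omega)
      omega
    · have h3 : ((b - a).val + (a - x).val) % (m+1)
          = (b - a).val + (a - x).val - (m+1) := by
        have hle : (m+1) ≤ (b - a).val + (a - x).val := by omega
        rw [Nat.mod_eq_sub_mod hle]
        apply Nat.mod_eq_of_lt
        omega
      omega
  have hc := Finset.card_filter_add_card_filter_not
    (s := (Finset.univ : Finset (Fin m))) (p := fun j => (a - f j).val < (a - b).val)
  have hcongr : (Finset.univ.filter fun j : Fin m => ¬ ((a - f j).val < (a - b).val))
      = Finset.univ.filter fun j => (b - f j).val < (b - a).val := by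
    apply Finset.filter_congr
    intro j _
    have := key (f j)
    tauto
  rw [hcongr] at hc
  have hA := ha ((a - b).val) hw1 (by omega)
  have hB := hb ((b - a).val) (by omega) (by omega)
  have hcu : (Finset.univ : Finset (Fin m)).card = m := by simp
  omega

lemma val_sub_cast (t : ℕ) (ht : t < m + 1) (x : ZMod (m+1)) :
    ((t : ZMod (m+1)) - x).val = (t + (m+1) - x.val) % (m+1) := by
  have hxv : x.val < m + 1 := ZMod.val_lt x
  have h1 : ((t : ZMod (m+1)) - x) = ((t + (m+1) - x.val : ℕ) : ZMod (m+1)) := by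
    have h2 : (t + (m+1) - x.val : ℕ) = t + ((m+1) - x.val) := by omega
    rw [h2, Nat.cast_add, Nat.cast_sub (le_of_lt hxv)]
    rw [ZMod.natCast_rightInverse x]
    simp only [CharP.cast_eq_zero]
    ring
  rw [h1, ZMod.val_natCast]

lemma CC_q (f : Fin m → ZMod (m+1)) : CC f (m+1) = m := by
  unfold CC
  rw [Finset.filter_true_of_mem (fun j _ => ZMod.val_lt _)]
  simp

lemma CC_zero (f : Fin m → ZMod (m+1)) : CC f 0 = 0 := by
  simp [CC]

lemma CC_le (f : Fin m → ZMod (m+1)) (x : ℕ) : CC f x ≤ m := by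
  simpa [CC] using Finset.card_filter_le (Finset.univ : Finset (Fin m))
    (fun j => (f j).val < x)

lemma CC_split (f : Fin m → ZMod (m+1)) {x u : ℕ} (hxu : x ≤ u) :
    CC f u = CC f x +
      (Finset.univ.filter fun j => x ≤ (f j).val ∧ (f j).val < u).card := by
  classical
  have h := Finset.card_filter_add_card_filter_not
    (s := Finset.univ.filter fun j : Fin m => (f j).val < u)
    (p := fun j => (f j).val < x)
  rw [Finset.filter_filter, Finset.filter_filter] at h
  have h1 : (Finset.univ.filter fun j : Fin m => (f j).val < u ∧ (f j).val < x)
      = Finset.univ.filter fun j => (f j).val < x := by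
    apply Finset.filter_congr; intro j _; omega
  have h2 : (Finset.univ.filter fun j : Fin m => (f j).val < u ∧ ¬ (f j).val < x)
      = Finset.univ.filter fun j => x ≤ (f j).val ∧ (f j).val < u := by
    apply Finset.filter_congr; intro j _; omega
  rw [h1, h2] at h
  unfold CC
  omega

lemma good_exists (f : Fin m → ZMod (m+1)) : ∃ a, Good f a := by
  obtain ⟨u, hu, hmin⟩ := Finset.exists_min_image (Finset.Icc 1 (m+1))
    (fun x => toLex (((CC f x : ℤ) - x, x) : ℤ × ℕ))
    ⟨1, Finset.mem_Icc.mpr (by omega)⟩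
  simp only [Finset.mem_Icc] at hu
  obtain ⟨hu1, huq⟩ := hu
  have humin : ∀ y, 1 ≤ y → y ≤ m + 1 → (CC f u : ℤ) - u ≤ (CC f y : ℤ) - y := by
    intro y h1 h2
    have := hmin y (Finset.mem_Icc.mpr ⟨h1, h2⟩)
    simp only [Prod.Lex.le_iff] at this
    rcases this with h | ⟨h3, _⟩
    · exact le_of_lt h
    · exact le_of_eq h3
  have huleast : ∀ x, 1 ≤ x → x ≤ m + 1 →
      ((CC f x : ℤ) - x ≤ (CC f u : ℤ) - u) → u ≤ x := by
    intro x h1 h2 hle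
    have := hmin x (Finset.mem_Icc.mpr ⟨h1, h2⟩)
    simp only [Prod.Lex.le_iff] at this
    rcases this with h | ⟨_, h4⟩
    · exact absurd hle (not_le.mpr h)
    · exact h4
  have hCq : CC f (m+1) = m := CC_q f
  have hC0 : CC f 0 = 0 := CC_zero f
  have hDu_neg : (CC f u : ℤ) - u ≤ -1 := by
    have := humin (m+1) (by omega) le_rfl
    rw [hCq] at this
    push_cast at this
    omega
  refine ⟨((u - 1 : ℕ) : ZMod (m+1)), ?_⟩
  intro w hw1 hwq
  have hval : ∀ j, (((u - 1 : ℕ) : ZMod (m+1)) - f j).val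
      = ((u - 1) + (m+1) - (f j).val) % (m+1) :=
    fun j => val_sub_cast _ (by omega) _
  have hvlt : ∀ j, (f j).val < m + 1 := fun j => ZMod.val_lt _
  rcases le_or_gt w u with hcase | hcase
  · -- w ≤ u
    have hpt : ∀ j : Fin m, ((((u - 1 : ℕ) : ZMod (m+1)) - f j).val < w
        ↔ (u - w ≤ (f j).val ∧ (f j).val < u)) := by
      intro j
      rw [hval j]
      rcases le_or_gt ((f j).val) (u - 1) with h | h
      · have h3 : ((u - 1) + (m+1) - (f j).val) % (m+1)
            = (u - 1) - (f j).val := by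
          have hle : (m+1) ≤ (u - 1) + (m+1) - (f j).val := by omega
          rw [Nat.mod_eq_sub_mod hle]
          have he2 : (u - 1) + (m+1) - (f j).val - (m+1) = (u - 1) - (f j).val := by
            omega
          rw [he2]
          apply Nat.mod_eq_of_lt
          omega
        omega
      · have h3 : ((u - 1) + (m+1) - (f j).val) % (m+1)
            = (u - 1) + (m+1) - (f j).val := Nat.mod_eq_of_lt (by omega)
        have := hvlt j
        omega
    rw [Finset.filter_congr (fun j _ => hpt j)]
    have hsplit := CC_split f (show u - w ≤ u by omega)
    have hDlt : (CC f u : ℤ) - u < (CC f (u - w) : ℤ) - (u - w : ℕ) := by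
      rcases Nat.eq_zero_or_pos (u - w) with h0 | hpos
      · rw [h0, hC0]
        push_cast
        omega
      · have h1 := humin (u - w) hpos (by omega)
        rcases lt_or_ge ((CC f u : ℤ) - u) ((CC f (u - w) : ℤ) - (u - w : ℕ)) with h | h
        · exact h
        · exfalso
          have := huleast (u - w) hpos (by omega) h
          omega
    omega
  · -- u < w ≤ m+1
    have hpt : ∀ j : Fin m, ((((u - 1 : ℕ) : ZMod (m+1)) - f j).val < w
        ↔ ((f j).val < u ∨ (m+1) + u - w ≤ (f j).val)) := by
      intro j
      rw [hval j]
      rcases le_or_gt ((f j).val) (u - 1) with h | h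
      · have h3 : ((u - 1) + (m+1) - (f j).val) % (m+1)
            = (u - 1) - (f j).val := by
          have hle : (m+1) ≤ (u - 1) + (m+1) - (f j).val := by omega
          rw [Nat.mod_eq_sub_mod hle]
          have he2 : (u - 1) + (m+1) - (f j).val - (m+1) = (u - 1) - (f j).val := by
            omega
          rw [he2]
          apply Nat.mod_eq_of_lt
          omega
        omega
      · have h3 : ((u - 1) + (m+1) - (f j).val) % (m+1)
            = (u - 1) + (m+1) - (f j).val := Nat.mod_eq_of_lt (by omega)
        have := hvlt j
        omega
    rw [Finset.filter_congr (fun j _ => hpt j)]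
    rw [Finset.filter_or]
    rw [Finset.card_union_of_disjoint (by
      rw [Finset.disjoint_filter]
      intro j _ hj1 hj2
      omega)]
    have hcompl := Finset.card_filter_add_card_filter_not
      (s := (Finset.univ : Finset (Fin m)))
      (p := fun j => (f j).val < (m+1) + u - w)
    have hcongr2 : (Finset.univ.filter fun j : Fin m => ¬ ((f j).val < (m+1) + u - w))
        = Finset.univ.filter fun j => (m+1) + u - w ≤ (f j).val := by
      apply Finset.filter_congr; intro j _; omega
    rw [hcongr2] at hcompl
    have hcu : (Finset.univ : Finset (Fin m)).card = m := by simp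
    have hDle : (CC f u : ℤ) - u ≤ (CC f ((m+1) + u - w) : ℤ) - ((m+1) + u - w : ℕ) :=
      humin _ (by omega) (by omega)
    have h1 : CC f ((m+1) + u - w) ≤ m := CC_le f _
    unfold CC at *
    omega

lemma good_shift (f : Fin m → ZMod (m+1)) (a b : ZMod (m+1)) (h : Good f b) :
    Good (fun j => f j + a) (b + a) := by
  intro w h1 h2
  have heq : ∀ j : Fin m, b + a - (f j + a) = b - f j := fun j => by ring
  simpa [heq] using h w h1 h2

open scoped Classical in
lemma card_good0_mul :
    ((Finset.univ : Finset (Fin m → ZMod (m+1))).filter fun g => Good g 0).card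
      * (m+1) = (m+1)^m := by
  classical
  have hbij : ((Finset.univ : Finset (ZMod (m+1))) ×ˢ
      ((Finset.univ : Finset (Fin m → ZMod (m+1))).filter fun g => Good g 0)).card
      = ((Finset.univ : Finset (Fin m → ZMod (m+1)))).card := by
    refine Finset.card_bij (fun p _ => fun j => p.2 j + p.1) (fun p hp => Finset.mem_univ _)
      ?_ ?_
    · rintro ⟨a₁, g₁⟩ hp₁ ⟨a₂, g₂⟩ hp₂ heq
      replace heq : (fun j => g₁ j + a₁) = (fun j => g₂ j + a₂) := heq
      simp only [Finset.mem_product, Finset.mem_filter] at hp₁ hp₂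
      have hg₁ : Good (fun j => g₁ j + a₁) (0 + a₁) := good_shift _ _ _ hp₁.2.2
      have hg₂ : Good (fun j => g₂ j + a₂) (0 + a₂) := good_shift _ _ _ hp₂.2.2
      rw [heq] at hg₁
      have ha : (0 : ZMod (m+1)) + a₁ = 0 + a₂ := good_unique _ hg₁ hg₂
      have ha' : a₁ = a₂ := by simpa using ha
      subst ha'
      have hg : g₁ = g₂ := by
        funext j
        have := congrFun heq j
        simpa using this
      simp [hg]
    · intro f _
      obtain ⟨a, hGa⟩ := good_exists f
      refine ⟨(a, fun j => f j - a), ?_, ?_⟩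
      · simp only [Finset.mem_product, Finset.mem_filter]
        refine ⟨Finset.mem_univ _, Finset.mem_univ _, ?_⟩
        have := good_shift f (-a) a hGa
        simpa [sub_eq_add_neg] using this
      · funext j; simp
  rw [Finset.card_product] at hbij
  simp only [Finset.card_univ, Fintype.card_fun, ZMod.card, Fintype.card_fin] at hbij
  rw [mul_comm]
  exact hbij

open scoped Classical in
lemma card_pfFun_eq_good0 :
    (pfFun m).card =
    ((Finset.univ : Finset (Fin m → ZMod (m+1))).filter fun g => Good g 0).card := by
  classical
  refine Finset.card_bij (fun f _ => fun j => ((f j : ℕ) : ZMod (m+1))) ?_ ?_ ?_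
  · intro f hf
    rw [mem_pfFun] at hf
    simp only [Finset.mem_filter]
    refine ⟨Finset.mem_univ _, ?_⟩
    intro w hw1 hwq
    have hvv : ∀ j, ((f j : ℕ) : ZMod (m+1)).val = f j :=
      fun j => ZMod.val_cast_of_lt (by have := (hf.1 j).2; omega)
    have hne : ∀ j, ((f j : ℕ) : ZMod (m+1)) ≠ 0 := by
      intro j h
      have h2 := hvv j
      rw [h, ZMod.val_zero] at h2
      have h3 := (hf.1 j).1
      omega
    have hpt : ∀ j : Fin m, (((0 : ZMod (m+1)) - ((f j : ℕ) : ZMod (m+1))).val < w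
        ↔ ¬ (f j ≤ m + 1 - w)) := by
      intro j
      rw [zero_sub, ZMod.neg_val]
      simp only [hne j, if_false, hvv j]
      have h1 := (hf.1 j).1
      have h2 := (hf.1 j).2
      omega
    rw [Finset.filter_congr (fun j _ => hpt j)]
    have hcompl := Finset.card_filter_add_card_filter_not
      (s := (Finset.univ : Finset (Fin m))) (p := fun j => f j ≤ m + 1 - w)
    simp only [Finset.card_univ, Fintype.card_fin] at hcompl
    rcases le_or_gt w m with hwm | hwm
    · have hcnt := hf.2 (m + 1 - w) (by omega) (by omega)
      unfold cntLe at hcnt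
      omega
    · have hcard := Finset.card_filter_le (Finset.univ : Finset (Fin m))
        (fun j => ¬ f j ≤ m + 1 - w)
      simp only [Finset.card_univ, Fintype.card_fin] at hcard
      omega
  · intro f₁ hf₁ f₂ hf₂ heq
    replace heq : (fun j => ((f₁ j : ℕ) : ZMod (m+1))) = (fun j => ((f₂ j : ℕ) : ZMod (m+1))) := heq
    rw [mem_pfFun] at hf₁ hf₂
    funext j
    have h₁ : ((f₁ j : ℕ) : ZMod (m+1)).val = f₁ j :=
      ZMod.val_cast_of_lt (by have := (hf₁.1 j).2; omega)
    have h₂ : ((f₂ j : ℕ) : ZMod (m+1)).val = f₂ j :=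
      ZMod.val_cast_of_lt (by have := (hf₂.1 j).2; omega)
    rw [← h₁, ← h₂, congrFun heq j]
  · intro g hg
    simp only [Finset.mem_filter] at hg
    have hGood := hg.2
    have hne : ∀ j, g j ≠ 0 := by
      intro j h
      have h1 := hGood 1 le_rfl (by omega)
      have : j ∈ Finset.univ.filter fun j : Fin m => ((0 : ZMod (m+1)) - g j).val < 1 := by
        simp only [Finset.mem_filter, Finset.mem_univ, true_and]
        rw [zero_sub, h]
        simp
      have hcard : 0 < (Finset.univ.filter
          fun j : Fin m => ((0 : ZMod (m+1)) - g j).val < 1).card :=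
        Finset.card_pos.mpr ⟨j, this⟩
      omega
    refine ⟨fun j => (g j).val, ?_, ?_⟩
    · rw [mem_pfFun]
      constructor
      · intro j
        have h1 : (g j).val < m + 1 := ZMod.val_lt _
        have h2 : (g j).val ≠ 0 := fun h => hne j ((ZMod.val_eq_zero _).1 h)
        omega
      · intro i hi1 hi2
        have hw := hGood (m + 1 - i) (by omega) (by omega)
        have hpt : ∀ j : Fin m, (((0 : ZMod (m+1)) - g j).val < m + 1 - i
            ↔ ¬ ((g j).val ≤ i)) := by
          intro j
          rw [zero_sub, ZMod.neg_val]
          simp only [hne j, if_false]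
          have h1 : (g j).val < m + 1 := ZMod.val_lt _
          have h2 : (g j).val ≠ 0 := fun h => hne j ((ZMod.val_eq_zero _).1 h)
          omega
        rw [Finset.filter_congr (fun j _ => hpt j)] at hw
        have hcompl := Finset.card_filter_add_card_filter_not
          (s := (Finset.univ : Finset (Fin m))) (p := fun j => (g j).val ≤ i)
        simp only [Finset.card_univ, Fintype.card_fin] at hcompl
        simp only [cntLe]
        omega
    · funext j
      exact ZMod.natCast_rightInverse (g j)

lemma card_pfFun_mul (m : ℕ) : (pfFun m).card * (m+1) = (m+1)^m := by
  classical
  rw [card_pfFun_eq_good0]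
  exact card_good0_mul

lemma card_pfFun (m : ℕ) : (pfFun m).card = (m+1)^(m-1) := by
  have h := card_pfFun_mul m
  rcases m with _ | t
  · simpa using h
  · have hpow : (t+1+1)^(t+1) = (t+1+1)^t * (t+1+1) := pow_succ _ _
    rw [hpow] at h
    have := Nat.eq_of_mul_eq_mul_right (by omega) h
    simpa using this

end Pollak

/-! ### Part B: the recurrence -/

lemma cntLe_succ {m : ℕ} (f : Fin (m+1) → ℕ) (i : ℕ) :
    cntLe f i = (if f 0 ≤ i then 1 else 0) + cntLe (fun j : Fin m => f j.succ) i := by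
  unfold cntLe
  rw [Finset.card_filter, Fin.sum_univ_succ, ← Finset.card_filter]

lemma cntLe_le {n : ℕ} (f : Fin n → ℕ) (i : ℕ) : cntLe f i ≤ n := by
  simpa [cntLe] using Finset.card_filter_le (Finset.univ : Finset (Fin n)) (fun j => f j ≤ i)

lemma cntLe_full {n : ℕ} (f : Fin n → ℕ) {i : ℕ} (h : ∀ j, f j ≤ i) : cntLe f i = n := by
  unfold cntLe
  rw [Finset.filter_true_of_mem (fun j _ => h j)]
  simp

lemma card_pfHead_top (m : ℕ) : (pfHead m (m+1)).card = (pfFun m).card := by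
  classical
  refine Finset.card_bij (fun f _ => fun j : Fin m => f j.succ) ?_ ?_ ?_
  · intro f hf
    show (fun j : Fin m => f j.succ) ∈ pfFun m
    rw [mem_pfHead] at hf
    obtain ⟨hpf, h0⟩ := hf
    rw [mem_pfFun] at hpf ⊢
    obtain ⟨hv, hc⟩ := hpf
    have htail : ∀ j : Fin m, f j.succ ≤ m := by
      intro j
      have hm : 0 < m := j.pos
      have h1 := hc m (by omega) (by omega)
      rw [cntLe_succ, h0] at h1
      rw [if_neg (show ¬ (m + 1 ≤ m) by omega)] at h1
      have h2 : cntLe (fun j : Fin m => f j.succ) m = m :=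
        le_antisymm (cntLe_le _ _) (by omega)
      simp only [cntLe] at h2
      have h3 : (Finset.univ.filter fun j : Fin m => f j.succ ≤ m) = Finset.univ :=
        Finset.eq_univ_of_card _ (by rw [h2]; simp)
      have h4 : j ∈ (Finset.univ.filter fun j : Fin m => f j.succ ≤ m) := by
        rw [h3]; exact Finset.mem_univ j
      exact (Finset.mem_filter.mp h4).2
    constructor
    · intro j
      exact ⟨(hv j.succ).1, htail j⟩
    · intro i hi1 hi2
      have h1 := hc i hi1 (by omega)
      rw [cntLe_succ, h0] at h1
      rw [if_neg (show ¬ (m + 1 ≤ i) by omega)] at h1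
      omega
  · intro f₁ hf₁ f₂ hf₂ heq
    rw [mem_pfHead] at hf₁ hf₂
    replace heq : (fun j : Fin m => f₁ j.succ) = (fun j => f₂ j.succ) := heq
    funext t
    rcases Fin.eq_zero_or_eq_succ t with rfl | ⟨j, rfl⟩
    · rw [hf₁.2, hf₂.2]
    · exact congrFun heq j
  · intro g hg
    rw [mem_pfFun] at hg
    refine ⟨Fin.cons (m+1) g, ?_, ?_⟩
    · rw [mem_pfHead, mem_pfFun]
      refine ⟨⟨?_, ?_⟩, Fin.cons_zero _ _⟩
      · intro t
        rcases Fin.eq_zero_or_eq_succ t with rfl | ⟨j, rfl⟩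
        · simp
        · rw [Fin.cons_succ]
          have := hg.1 j
          omega
      · intro i hi1 hi2
        rw [cntLe_succ]
        simp only [Fin.cons_zero, Fin.cons_succ]
        rcases le_or_gt i m with h | h
        · rcases Nat.eq_zero_or_pos i with rfl | hip
          · omega
          · have h5 := hg.2 i hip h
            have he : cntLe (fun j : Fin m => g j) i = cntLe g i := rfl
            omega
        · have hfull : cntLe (fun j : Fin m => g j) i = m :=
            cntLe_full _ (fun j => by have := hg.1 j; omega)
          rw [if_pos (show m + 1 ≤ i by omega)]
          omega
    · funext j
      exact Fin.cons_succ _ _ _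

lemma card_pfHead_rec (m k : ℕ) (hk1 : 1 ≤ k) (hkm : k ≤ m) :
    (pfHead m k).card =
      ((pfHead m k).filter fun f => cntLe f k = k).card + (pfHead m (k+1)).card := by
  classical
  have hsplit := Finset.card_filter_add_card_filter_not (s := pfHead m k)
    (p := fun f => cntLe f k = k)
  suffices h : ((pfHead m k).filter fun f => ¬ cntLe f k = k).card
      = (pfHead m (k+1)).card by omega
  refine Finset.card_bij (fun f _ => Function.update f 0 (k+1)) ?_ ?_ ?_
  · intro f hf
    show Function.update f 0 (k+1) ∈ pfHead m (k+1)
    rw [Finset.mem_filter, mem_pfHead, mem_pfFun] at hf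
    obtain ⟨⟨⟨hv, hc⟩, h0⟩, hne⟩ := hf
    have htail : (fun j : Fin m => Function.update f 0 (k+1) j.succ)
        = fun j : Fin m => f j.succ :=
      funext fun j => Function.update_of_ne (Fin.succ_ne_zero j) _ _
    rw [mem_pfHead, mem_pfFun]
    refine ⟨⟨?_, ?_⟩, Function.update_self _ _ _⟩
    · intro j
      rcases Fin.eq_zero_or_eq_succ j with rfl | ⟨j', rfl⟩
      · rw [Function.update_self]; omega
      · rw [Function.update_of_ne (Fin.succ_ne_zero j')]; exact hv j'.succ
    · intro i hi1 hi2
      rw [cntLe_succ, Function.update_self, htail]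
      have h1 := hc i hi1 hi2
      rw [cntLe_succ, h0] at h1
      have h2 := hc k (by omega) (by omega)
      rw [cntLe_succ, h0, if_pos le_rfl] at h2
      rw [cntLe_succ, h0, if_pos le_rfl] at hne
      rcases lt_trichotomy i k with hik | rfl | hik
      · rw [if_neg (show ¬ (k ≤ i) by omega)] at h1
        rw [if_neg (show ¬ (k + 1 ≤ i) by omega)]
        omega
      · rw [if_neg (show ¬ (i + 1 ≤ i) by omega)]
        omega
      · rw [if_pos (show k ≤ i by omega)] at h1
        rw [if_pos (show k + 1 ≤ i by omega)]
        omega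
  · intro f₁ hf₁ f₂ hf₂ heq
    replace heq : Function.update f₁ 0 (k+1) = Function.update f₂ 0 (k+1) := heq
    rw [Finset.mem_filter, mem_pfHead] at hf₁ hf₂
    funext t
    rcases Fin.eq_zero_or_eq_succ t with rfl | ⟨j, rfl⟩
    · rw [hf₁.1.2, hf₂.1.2]
    · have := congrFun heq j.succ
      rwa [Function.update_of_ne (Fin.succ_ne_zero j),
        Function.update_of_ne (Fin.succ_ne_zero j)] at this
  · intro g hg
    rw [mem_pfHead, mem_pfFun] at hg
    obtain ⟨⟨hv, hc⟩, h0⟩ := hg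
    have htail : (fun j : Fin m => Function.update g 0 k j.succ)
        = fun j : Fin m => g j.succ :=
      funext fun j => Function.update_of_ne (Fin.succ_ne_zero j) _ _
    refine ⟨Function.update g 0 k, ?_, ?_⟩
    · rw [Finset.mem_filter, mem_pfHead, mem_pfFun]
      have hck : cntLe (Function.update g 0 k) k
          = 1 + cntLe (fun j : Fin m => g j.succ) k := by
        rw [cntLe_succ, Function.update_self, htail, if_pos le_rfl]
      have hgk := hc k (by omega) (by omega)
      rw [cntLe_succ, h0] at hgk
      rw [if_neg (show ¬ (k + 1 ≤ k) by omega)] at hgk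
      refine ⟨⟨⟨?_, ?_⟩, Function.update_self _ _ _⟩, ?_⟩
      · intro j
        rcases Fin.eq_zero_or_eq_succ j with rfl | ⟨j', rfl⟩
        · rw [Function.update_self]; omega
        · rw [Function.update_of_ne (Fin.succ_ne_zero j')]; exact hv j'.succ
      · intro i hi1 hi2
        rw [cntLe_succ, Function.update_self, htail]
        have h1 := hc i hi1 hi2
        rw [cntLe_succ, h0] at h1
        rcases lt_trichotomy i k with hik | rfl | hik
        · rw [if_neg (show ¬ (k + 1 ≤ i) by omega)] at h1
          rw [if_neg (show ¬ (k ≤ i) by omega)]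
          omega
        · rw [if_pos le_rfl]
          omega
        · rw [if_pos (show k + 1 ≤ i by omega)] at h1
          rw [if_pos (show k ≤ i by omega)]
          omega
      · rw [hck]
        omega
    · show Function.update (Function.update g 0 k) 0 (k+1) = g
      rw [Function.update_idem]
      rw [← h0]
      exact Function.update_eq_self _ _

lemma filter_split_card {n : ℕ} (S : Finset (Fin n)) (p : Fin n → Prop) [DecidablePred p] :
    (Finset.univ.filter p).card = (S.filter p).card + ((Sᶜ).filter p).card := by
  classical
  have h1 : S.filter p ∪ Sᶜ.filter p = Finset.univ.filter p := by
    rw [← Finset.filter_union, Finset.union_compl]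
  rw [← h1, Finset.card_union_of_disjoint
    (Finset.disjoint_filter_filter disjoint_compl_right)]

lemma card_filter_equiv {n r : ℕ} (S : Finset (Fin n)) (e : Fin r ≃ {x : Fin n // x ∈ S})
    (p : Fin n → Prop) [DecidablePred p] :
    (Finset.univ.filter fun x : Fin r => p (e x).val).card = (S.filter p).card := by
  refine Finset.card_nbij (fun x => (e x).val) ?_ ?_ ?_
  · intro x hx
    rw [Finset.mem_coe, Finset.mem_filter] at hx ⊢
    exact ⟨(e x).2, hx.2⟩
  · intro a _ b _ h
    exact e.injective (Subtype.ext h)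
  · intro j hj
    simp only [Finset.coe_filter, Set.mem_setOf_eq] at hj
    refine ⟨e.symm ⟨j, hj.1⟩, ?_, ?_⟩
    · simp only [Finset.coe_filter, Set.mem_setOf_eq, Finset.mem_univ, true_and]
      rw [Equiv.apply_symm_apply]
      exact hj.2
    · show ((e (e.symm ⟨j, hj.1⟩)) : Fin n) = j
      rw [Equiv.apply_symm_apply]

lemma cnt_decomp {m : ℕ} (f : Fin (m+1) → ℕ) (S : Finset (Fin m)) (i : ℕ) :
    cntLe f i = (if f 0 ≤ i then 1 else 0)
      + (S.filter fun j => f j.succ ≤ i).card + ((Sᶜ).filter fun j => f j.succ ≤ i).card := by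
  rw [cntLe_succ]
  simp only [cntLe]
  rw [filter_split_card S (fun j => f j.succ ≤ i)]
  omega

section Fiber

variable {m k : ℕ}

lemma fiber_card (hk1 : 1 ≤ k) (hkm : k ≤ m) (S : Finset (Fin m)) (hS : S.card = k - 1) :
    (((pfHead m k).filter fun f => cntLe f k = k).filter
        (fun f => Finset.univ.filter (fun j : Fin m => f j.succ ≤ k) = S)).card
      = ((pfFun (k-1)) ×ˢ (pfFun (m+1-k))).card := by
  classical
  have hSc : (Sᶜ).card = m + 1 - k := by
    rw [Finset.card_compl, hS]
    simp only [Fintype.card_fin]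
    omega
  set e : Fin (k-1) ≃ {x : Fin m // x ∈ S} :=
    (Fintype.equivFinOfCardEq (by rw [Fintype.card_coe]; exact hS)).symm with he
  set e' : Fin (m+1-k) ≃ {x : Fin m // x ∈ Sᶜ} :=
    (Fintype.equivFinOfCardEq (by rw [Fintype.card_coe]; exact hSc)).symm with he'
  -- membership characterization of the fiber
  have hfib : ∀ f : Fin (m+1) → ℕ,
      f ∈ ((pfHead m k).filter fun f => cntLe f k = k).filter
        (fun f => Finset.univ.filter (fun j : Fin m => f j.succ ≤ k) = S) ↔
      ((∀ j, 1 ≤ f j ∧ f j ≤ m+1) ∧ (∀ i, 1 ≤ i → i ≤ m+1 → i ≤ cntLe f i)) ∧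
        f 0 = k ∧ cntLe f k = k ∧
        Finset.univ.filter (fun j : Fin m => f j.succ ≤ k) = S := by
    intro f
    rw [Finset.mem_filter, Finset.mem_filter, mem_pfHead, mem_pfFun]
    tauto
  refine Finset.card_bij'
    (fun f _ => ((fun x => f (e x).val.succ, fun y => f (e' y).val.succ - k) :
      (Fin (k-1) → ℕ) × (Fin (m+1-k) → ℕ)))
    (fun p _ => fun t : Fin (m+1) =>
      Fin.cases k (fun j : Fin m =>
        if hj : j ∈ S then p.1 (e.symm ⟨j, hj⟩)
        else p.2 (e'.symm ⟨j, Finset.mem_compl.mpr hj⟩) + k) t) ?_ ?_ ?_ ?_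
  · -- forward membership
    intro f hf
    rw [hfib] at hf
    obtain ⟨⟨hv, hc⟩, h0, hk, hSf⟩ := hf
    have hmemS : ∀ j : Fin m, j ∈ S ↔ f j.succ ≤ k := by
      intro j
      rw [← hSf, Finset.mem_filter]
      simp
    have hS2 : ∀ j : Fin m, j ∉ S → k + 1 ≤ f j.succ := by
      intro j hj
      by_contra hcon
      exact hj ((hmemS j).mpr (by omega))
    have hS1 : ∀ j ∈ S, f j.succ ≤ k - 1 := by
      intro j hj
      rcases Nat.lt_or_ge k 2 with hk2 | hk2
      · have hSe : S = ∅ := Finset.card_eq_zero.mp (by omega)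
        rw [hSe] at hj
        simp at hj
      · have hc1 := hc (k-1) (by omega) (by omega)
        rw [cnt_decomp f S, h0] at hc1
        rw [if_neg (show ¬ (k ≤ k - 1) by omega)] at hc1
        have hempt : ((Sᶜ).filter fun j : Fin m => f j.succ ≤ k - 1) = ∅ := by
          rw [Finset.filter_eq_empty_iff]
          intro x hx
          have := hS2 x (Finset.mem_compl.mp hx)
          omega
        rw [hempt, Finset.card_empty] at hc1
        have hsub : (S.filter fun j : Fin m => f j.succ ≤ k - 1) = S :=
          Finset.eq_of_subset_of_card_le (Finset.filter_subset _ _) (by omega)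
        rw [← hsub] at hj
        exact (Finset.mem_filter.mp hj).2
    rw [Finset.mem_product]
    constructor
    · -- u ∈ pfFun (k-1)
      show (fun x : Fin (k-1) => f (e x).val.succ) ∈ pfFun (k-1)
      rw [mem_pfFun]
      constructor
      · intro x
        have h1 := hv ((e x).val).succ
        have h2 := hS1 (e x).val (e x).2
        omega
      · intro i hi1 hi2
        show i ≤ (Finset.univ.filter fun x : Fin (k-1) => f (e x).val.succ ≤ i).card
        rw [card_filter_equiv S e (fun j => f j.succ ≤ i)]
        have hc1 := hc i hi1 (by omega)
        rw [cnt_decomp f S, h0] at hc1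
        rw [if_neg (show ¬ (k ≤ i) by omega)] at hc1
        have hempt : ((Sᶜ).filter fun j : Fin m => f j.succ ≤ i) = ∅ := by
          rw [Finset.filter_eq_empty_iff]
          intro x hx
          have := hS2 x (Finset.mem_compl.mp hx)
          omega
        rw [hempt, Finset.card_empty] at hc1
        omega
    · -- v ∈ pfFun (m+1-k)
      show (fun y : Fin (m+1-k) => f (e' y).val.succ - k) ∈ pfFun (m+1-k)
      rw [mem_pfFun]
      constructor
      · intro y
        have h1 := hv ((e' y).val).succ
        have h2 := hS2 (e' y).val (Finset.mem_compl.mp (e' y).2)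
        omega
      · intro i hi1 hi2
        show i ≤ (Finset.univ.filter fun y : Fin (m+1-k) => f (e' y).val.succ - k ≤ i).card
        rw [card_filter_equiv (Sᶜ) e' (fun j => f j.succ - k ≤ i)]
        have hcong : ((Sᶜ).filter fun j : Fin m => f j.succ - k ≤ i)
            = (Sᶜ).filter fun j : Fin m => f j.succ ≤ i + k :=
          Finset.filter_congr (fun j hj => by
            have := hS2 j (Finset.mem_compl.mp hj)
            omega)
        rw [hcong]
        have hc1 := hc (i+k) (by omega) (by omega)
        rw [cnt_decomp f S, h0] at hc1
        rw [if_pos (show k ≤ i + k by omega)] at hc1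
        have hfull : (S.filter fun j : Fin m => f j.succ ≤ i + k) = S :=
          Finset.filter_true_of_mem (fun j hj => by
            have := hS1 j hj
            omega)
        rw [hfull, hS] at hc1
        omega
  · -- backward membership
    intro p hp
    obtain ⟨u, v⟩ := p
    have hu : u ∈ pfFun (k-1) := (Finset.mem_product.mp hp).1
    have hv' : v ∈ pfFun (m+1-k) := (Finset.mem_product.mp hp).2
    rw [mem_pfFun] at hu hv'
    rw [hfib]
    set g : Fin (m+1) → ℕ := fun t => Fin.cases k (fun j : Fin m =>
        if hj : j ∈ S then u (e.symm ⟨j, hj⟩)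
        else v (e'.symm ⟨j, Finset.mem_compl.mpr hj⟩) + k) t with hg
    show ((∀ j, 1 ≤ g j ∧ g j ≤ m+1) ∧ (∀ i, 1 ≤ i → i ≤ m+1 → i ≤ cntLe g i)) ∧
        g 0 = k ∧ cntLe g k = k ∧
        Finset.univ.filter (fun j : Fin m => g j.succ ≤ k) = S
    have hg0 : g 0 = k := rfl
    have hgS : ∀ (j : Fin m) (hj : j ∈ S), g j.succ = u (e.symm ⟨j, hj⟩) := by
      intro j hj
      rw [hg]
      simp only [Fin.cases_succ]
      rw [dif_pos hj]
    have hgSc : ∀ (j : Fin m) (hj : j ∉ S),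
        g j.succ = v (e'.symm ⟨j, Finset.mem_compl.mpr hj⟩) + k := by
      intro j hj
      rw [hg]
      simp only [Fin.cases_succ]
      rw [dif_neg hj]
    have hgvals : ∀ j, 1 ≤ g j ∧ g j ≤ m + 1 := by
      intro t
      refine Fin.cases ?_ ?_ t
      · rw [hg0]; omega
      · intro j
        by_cases hj : j ∈ S
        · rw [hgS j hj]
          have h1 := hu.1 (e.symm ⟨j, hj⟩)
          omega
        · rw [hgSc j hj]
          have h1 := hv'.1 (e'.symm ⟨j, Finset.mem_compl.mpr hj⟩)
          omega
    have hgue : ∀ x : Fin (k-1), g (e x).val.succ = u x := by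
      intro x
      rw [hgS _ (e x).2, Subtype.coe_eta, Equiv.symm_apply_apply]
    have hgve : ∀ y : Fin (m+1-k), g (e' y).val.succ = v y + k := by
      intro y
      have hnot : (e' y).val ∉ S := Finset.mem_compl.mp (e' y).2
      rw [hgSc _ hnot, Subtype.coe_eta, Equiv.symm_apply_apply]
    have hSpart : ∀ i, (S.filter fun j : Fin m => g j.succ ≤ i).card = cntLe u i := by
      intro i
      rw [← card_filter_equiv S e (fun j => g j.succ ≤ i)]
      unfold cntLe
      congr 1
      apply Finset.filter_congr
      intro x _
      rw [hgue x]
    have hScpart : ∀ i, ((Sᶜ).filter fun j : Fin m => g j.succ ≤ i).card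
        = (Finset.univ.filter fun y : Fin (m+1-k) => v y + k ≤ i).card := by
      intro i
      rw [← card_filter_equiv (Sᶜ) e' (fun j => g j.succ ≤ i)]
      congr 1
      apply Finset.filter_congr
      intro y _
      rw [hgve y]
    have hufull : ∀ i, k - 1 ≤ i → cntLe u i = k - 1 := by
      intro i hi
      apply cntLe_full
      intro x
      have := hu.1 x
      omega
    refine ⟨⟨hgvals, ?_⟩, hg0, ?_, ?_⟩
    · intro i hi1 hi2
      rw [cnt_decomp g S, hg0, hSpart, hScpart]
      rcases lt_or_ge i k with hik | hik
      · rw [if_neg (show ¬ (k ≤ i) by omega)]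
        have h1 := hu.2 i hi1 (by omega)
        omega
      · rw [if_pos hik]
        rw [hufull i (by omega)]
        have hvc : (Finset.univ.filter fun y : Fin (m+1-k) => v y + k ≤ i).card
            = cntLe v (i - k) := by
          unfold cntLe
          congr 1
          apply Finset.filter_congr
          intro y _
          constructor <;> (intro; omega)
        rw [hvc]
        rcases Nat.eq_or_lt_of_le hik with rfl | hik2
        · omega
        · have h2 := hv'.2 (i - k) (by omega) (by omega)
          omega
    · rw [cnt_decomp g S, hg0, hSpart, hScpart, if_pos le_rfl]
      rw [hufull k (by omega)]
      have hvc : (Finset.univ.filter fun y : Fin (m+1-k) => v y + k ≤ k).card = 0 := by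
        rw [Finset.card_eq_zero, Finset.filter_eq_empty_iff]
        intro y _
        have := hv'.1 y
        omega
      omega
    · ext j
      rw [Finset.mem_filter]
      by_cases hj : j ∈ S
      · rw [hgS j hj]
        have h1 := hu.1 (e.symm ⟨j, hj⟩)
        simp only [Finset.mem_univ, true_and]
        constructor
        · intro; exact hj
        · intro; omega
      · rw [hgSc j hj]
        have h1 := hv'.1 (e'.symm ⟨j, Finset.mem_compl.mpr hj⟩)
        simp only [Finset.mem_univ, true_and]
        constructor
        · intro hcon; omega
        · intro hcon; exact absurd hcon hj
  · -- left inverse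
    intro f hf
    rw [hfib] at hf
    obtain ⟨⟨hv, hc⟩, h0, hk, hSf⟩ := hf
    have hmemS : ∀ j : Fin m, j ∈ S ↔ f j.succ ≤ k := by
      intro j
      rw [← hSf, Finset.mem_filter]
      simp
    funext t
    refine Fin.cases ?_ ?_ t
    · simp only [Fin.cases_zero]
      exact h0.symm
    · intro j
      simp only [Fin.cases_succ]
      by_cases hj : j ∈ S
      · rw [dif_pos hj]
        show f ((e (e.symm ⟨j, hj⟩)).val).succ = f j.succ
        rw [Equiv.apply_symm_apply]
      · rw [dif_neg hj]
        have hle : k + 1 ≤ f j.succ := by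
          by_contra hcon
          exact hj ((hmemS j).mpr (by omega))
        rw [Equiv.apply_symm_apply]
        show f j.succ - k + k = f j.succ
        omega
  · -- right inverse
    intro p hp
    obtain ⟨u, v⟩ := p
    simp only [Prod.mk.injEq]
    constructor
    · funext x
      simp only [Fin.cases_succ]
      rw [dif_pos (e x).2, Subtype.coe_eta, Equiv.symm_apply_apply]
    · funext y
      simp only [Fin.cases_succ]
      have hnot : (e' y).val ∉ S := Finset.mem_compl.mp (e' y).2
      rw [dif_neg hnot, Subtype.coe_eta, Equiv.symm_apply_apply]
      omega

end Fiber

lemma B_card (m k : ℕ) (hk1 : 1 ≤ k) (hkm : k ≤ m) :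
    ((pfHead m k).filter fun f => cntLe f k = k).card
      = Nat.choose m (k-1) * ((pfFun (k-1)).card * (pfFun (m+1-k)).card) := by
  classical
  have hmaps : ∀ f ∈ (pfHead m k).filter (fun f => cntLe f k = k),
      Finset.univ.filter (fun j : Fin m => f j.succ ≤ k)
        ∈ Finset.powersetCard (k-1) Finset.univ := by
    intro f hf
    rw [Finset.mem_filter, mem_pfHead] at hf
    obtain ⟨⟨hpf, h0⟩, hcnt⟩ := hf
    rw [Finset.mem_powersetCard_univ]
    rw [cntLe_succ, h0, if_pos le_rfl] at hcnt
    simp only [cntLe] at hcnt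
    omega
  rw [Finset.card_eq_sum_card_fiberwise hmaps]
  rw [Finset.sum_congr rfl
    (fun S hS => fiber_card hk1 hkm S (Finset.mem_powersetCard_univ.mp hS))]
  rw [Finset.sum_const, Finset.card_powersetCard, Finset.card_univ, Fintype.card_fin,
    Finset.card_product, smul_eq_mul]

lemma rec_formula (m k : ℕ) (hk1 : 1 ≤ k) (hkm : k ≤ m) :
    (pfHead m k).card = (pfHead m (k+1)).card
      + Nat.choose m (k-1) * (k^(k-2) * (m+2-k)^(m-k)) := by
  rw [card_pfHead_rec m k hk1 hkm, B_card m k hk1 hkm, card_pfFun, card_pfFun]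
  rw [show k - 1 + 1 = k by omega, show k - 1 - 1 = k - 2 by omega,
    show m + 1 - k + 1 = m + 2 - k by omega, show m + 1 - k - 1 = m - k by omega]
  ring

lemma main_count (m : ℕ) : ∀ d k : ℕ, 1 ≤ k → k + d = m + 1 →
    (pfHead m k).card = ∑ s ∈ Finset.range (d+1),
      Nat.choose m s * (s+1)^(s-1) * (m+1-s)^(m-1-s) := by
  intro d
  induction d with
  | zero =>
    intro k hk1 hkd
    have hk : k = m + 1 := by omega
    subst hk
    rw [card_pfHead_top, card_pfFun, Finset.sum_range_one]
    simp
  | succ d ih =>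
    intro k hk1 hkd
    have hkm : k ≤ m := by omega
    rw [rec_formula m k hk1 hkm, Finset.sum_range_succ,
      ih (k+1) (by omega) (by omega)]
    congr 1
    rw [show d + 1 + 1 = m + 2 - k by omega, show d + 1 - 1 = m - k by omega,
      show m + 1 - (d + 1) = k by omega, show m - 1 - (d + 1) = k - 2 by omega,
      show d + 1 = m - (k - 1) by omega,
      Nat.choose_symm (show k - 1 ≤ m by omega)]
    ring

theorem stmt3 (n : ℕ) (hn : 1 ≤ n) :
    (∀ k : ℕ, 1 ≤ k → k ≤ n →
      Set.ncard {l : List ℕ | IsPFList n l ∧ l.headI = k} =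
        ∑ s ∈ Finset.range (n - k + 1),
          Nat.choose (n - 1) s * (s + 1) ^ (s - 1) * (n - s) ^ (n - s - 2)) ∧
    (∀ k₁ k₂ : ℕ, 1 ≤ k₁ → k₁ ≤ k₂ → k₂ ≤ n →
      Set.ncard {l : List ℕ | IsPFList n l ∧ l.headI = k₂} ≤
        Set.ncard {l : List ℕ | IsPFList n l ∧ l.headI = k₁}) := by
  obtain ⟨m, rfl⟩ : ∃ m, n = m + 1 := ⟨n - 1, by omega⟩
  constructor
  · intro k hk1 hkn
    rw [ncard_eq_card_pfHead m k, main_count m (m+1-k) k hk1 (by omega)]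
    apply Finset.sum_congr rfl
    intro s _
    rw [show m + 1 - 1 = m by omega, show m + 1 - s - 2 = m - 1 - s by omega]
  · intro k₁ k₂ h1 h12 h2n
    rw [ncard_eq_card_pfHead m k₁, ncard_eq_card_pfHead m k₂,
      main_count m (m+1-k₁) k₁ h1 (by omega),
      main_count m (m+1-k₂) k₂ (by omega) (by omega)]
    apply Finset.sum_le_sum_of_subset
    apply Finset.range_subset_range.mpr
    omega
end

section
/- For every n ≥ 2, the number of parking functions π of size n with π₁ = 1 equals 2(n+1)^{n−2}; equivalently, since |PF_n| = (n+1)^{n−1}, a uniformly random parking function of size n has P(π₁ = 1) = 2/(n+1). -/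
open Finset

namespace PFAux

variable {m : ℕ}

def cnt (u : Fin m → ZMod (m + 2)) (r : ℕ) : ℕ :=
  (Finset.univ.filter fun k => u k = (r : ZMod (m + 2))).card

def wlk (u : Fin m → ZMod (m + 2)) (j : ℕ) : ℤ :=
  (j : ℤ) - ∑ r ∈ Finset.range j, (cnt u r : ℤ)

lemma cnt_period (u : Fin m → ZMod (m + 2)) (r : ℕ) : cnt u (r + (m + 2)) = cnt u r := by
  have h : ((r + (m + 2) : ℕ) : ZMod (m + 2)) = (r : ZMod (m + 2)) := by
    rw [Nat.cast_add, ZMod.natCast_self, add_zero]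
  unfold cnt
  rw [h]

lemma cnt_eq_val (u : Fin m → ZMod (m + 2)) {r : ℕ} (hr : r < m + 2) :
    cnt u r = (Finset.univ.filter fun k => (u k).val = r).card := by
  unfold cnt
  congr 1
  apply filter_congr
  intro k _
  constructor
  · rintro h; rw [h, ZMod.val_cast_of_lt hr]
  · intro h; apply ZMod.val_injective; rw [h, ZMod.val_cast_of_lt hr]

lemma sum_cnt_le (u : Fin m → ZMod (m + 2)) {i : ℕ} (hi : i < m + 2) :
    ∑ r ∈ Finset.range (i + 1), cnt u r
      = (Finset.univ.filter fun k => (u k).val ≤ i).card := by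
  have : ∀ r ∈ Finset.range (i + 1), cnt u r
      = (Finset.univ.filter fun k => (u k).val = r).card := by
    intro r hr
    exact cnt_eq_val u (lt_of_lt_of_le (mem_range.mp hr) (by omega))
  rw [Finset.sum_congr rfl this]
  simp only [Finset.card_filter]
  rw [Finset.sum_comm]
  apply Finset.sum_congr rfl
  intro k _
  rw [Finset.sum_ite_eq (Finset.range (i + 1)) ((u k).val) (fun _ => (1:ℕ))]
  simp [Nat.lt_succ_iff]

lemma sum_cnt_full (u : Fin m → ZMod (m + 2)) :
    ∑ r ∈ Finset.range (m + 2), cnt u r = m := by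
  have h : ∑ r ∈ Finset.range ((m + 1) + 1), cnt u r
      = (Finset.univ.filter fun k => (u k).val ≤ m + 1).card := sum_cnt_le u (by omega)
  rw [show m + 2 = (m+1)+1 by omega, h]
  have : (Finset.univ.filter fun k : Fin m => (u k).val ≤ m + 1) = Finset.univ := by
    apply Finset.filter_true_of_mem
    intro k _
    have := ZMod.val_lt (u k)
    omega
  rw [this, Finset.card_univ, Fintype.card_fin]

lemma wlk_zero (u : Fin m → ZMod (m + 2)) : wlk u 0 = 0 := by simp [wlk]

lemma wlk_succ (u : Fin m → ZMod (m + 2)) (j : ℕ) :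
    wlk u (j + 1) = wlk u j + 1 - cnt u j := by
  simp [wlk, Finset.sum_range_succ]
  ring

lemma wlk_step_le (u : Fin m → ZMod (m + 2)) (j : ℕ) :
    wlk u (j + 1) ≤ wlk u j + 1 := by
  have h := wlk_succ u j
  have : (0:ℤ) ≤ cnt u j := Int.ofNat_nonneg _
  omega

lemma wlk_period (u : Fin m → ZMod (m + 2)) : ∀ j, wlk u (j + (m + 2)) = wlk u j + 2 := by
  intro j
  induction j with
  | zero =>
    rw [wlk_zero, zero_add]
    unfold wlk
    rw [show ∑ r ∈ Finset.range (m + 2), ((cnt u r : ℤ)) = ((∑ r ∈ Finset.range (m + 2), cnt u r : ℕ) : ℤ) from (Nat.cast_sum _ _).symm, sum_cnt_full]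
    push_cast
    ring
  | succ j ih =>
    have h1 : wlk u ((j + (m + 2)) + 1) = wlk u (j + (m+2)) + 1 - cnt u (j + (m+2)) :=
      wlk_succ u _
    have h2 : cnt u (j + (m + 2)) = cnt u j := cnt_period u j
    have h3 := wlk_succ u j
    have : j + 1 + (m + 2) = (j + (m + 2)) + 1 := by omega
    rw [this, h1, h2, ih, h3]
    ring


def wmax (u : Fin m → ZMod (m + 2)) (j : ℕ) : ℤ :=
  (Finset.range (j + 1)).sup' Finset.nonempty_range_add_one (wlk u)

lemma le_wmax (u : Fin m → ZMod (m + 2)) {i j : ℕ} (h : i ≤ j) : wlk u i ≤ wmax u j :=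
  Finset.le_sup' (wlk u) (Finset.mem_range.mpr (by omega))

lemma wmax_le (u : Fin m → ZMod (m + 2)) {j : ℕ} {a : ℤ} (h : ∀ i ≤ j, wlk u i ≤ a) :
    wmax u j ≤ a :=
  Finset.sup'_le _ _ fun i hi => h i (by have := Finset.mem_range.mp hi; omega)

lemma exists_wmax (u : Fin m → ZMod (m + 2)) (j : ℕ) :
    ∃ i ≤ j, wmax u j = wlk u i := by
  obtain ⟨i, hi, h⟩ := Finset.exists_mem_eq_sup' (Finset.nonempty_range_add_one (n := j)) (wlk u)
  exact ⟨i, by have := Finset.mem_range.mp hi; omega, h⟩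

lemma wmax_succ (u : Fin m → ZMod (m + 2)) (j : ℕ) :
    wmax u (j + 1) = max (wlk u (j + 1)) (wmax u j) := by
  apply le_antisymm
  · apply wmax_le
    intro i hi
    rcases Nat.lt_succ_iff_lt_or_eq.mp (Nat.lt_succ_of_le hi) with h | h
    · exact le_trans (le_wmax u (by omega)) (le_max_right _ _)
    · rw [h]; exact le_max_left _ _
  · apply max_le (le_wmax u le_rfl)
    exact wmax_le u fun i hi => le_wmax u (by omega)

lemma wmax_step (u : Fin m → ZMod (m + 2)) (j : ℕ) :
    wmax u (j + 1) = wmax u j + (if wmax u j < wlk u (j + 1) then 1 else 0) := by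
  rw [wmax_succ]
  have h1 : wlk u (j + 1) ≤ wlk u j + 1 := wlk_step_le u j
  have h2 : wlk u j ≤ wmax u j := le_wmax u le_rfl
  split_ifs with h
  · have : wlk u (j + 1) = wmax u j + 1 := by omega
    rw [this, max_eq_left (by omega)]
  · rw [max_eq_right (not_lt.mp h)]; ring

lemma wmax_double (u : Fin m → ZMod (m + 2)) :
    wmax u ((m + 2) + (m + 2)) = wmax u (m + 2) + 2 := by
  apply le_antisymm
  · apply wmax_le
    intro i hi
    rcases le_or_gt i (m + 2) with h | h
    · have := le_wmax u (j := m + 2) h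
      omega
    · have hrw : i = (i - (m + 2)) + (m + 2) := by omega
      rw [hrw, wlk_period]
      have := le_wmax u (i := i - (m + 2)) (j := m + 2) (by omega)
      omega
  · obtain ⟨i, hi, heq⟩ := exists_wmax u (m + 2)
    have h1 : wlk u (i + (m + 2)) = wmax u (m + 2) + 2 := by rw [wlk_period, ← heq]
    have h2 : wlk u (i + (m + 2)) ≤ wmax u ((m + 2) + (m + 2)) :=
      le_wmax u (by omega)
    omega

lemma sum_rec_aux (u : Fin m → ZMod (m + 2)) (L : ℕ) :
    ∑ σ ∈ Finset.range L,
        (if wmax u (σ + (m + 2)) < wlk u (σ + (m + 2) + 1) then (1:ℤ) else 0)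
      = wmax u ((m + 2) + L) - wmax u (m + 2) := by
  induction L with
  | zero => simp
  | succ L ih =>
    rw [Finset.sum_range_succ, ih]
    have := wmax_step u (L + (m + 2))
    have hrw : (m + 2) + (L + 1) = (L + (m + 2)) + 1 := by omega
    have hrw2 : (m + 2) + L = L + (m + 2) := by omega
    rw [hrw, hrw2] at *
    omega

lemma card_rec (u : Fin m → ZMod (m + 2)) :
    ((Finset.range (m + 2)).filter
        fun σ => wmax u (σ + (m + 2)) < wlk u (σ + (m + 2) + 1)).card = 2 := by
  have h := sum_rec_aux u (m + 2)
  rw [wmax_double u] at h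
  have h2 : ∑ σ ∈ Finset.range (m + 2),
      (if wmax u (σ + (m + 2)) < wlk u (σ + (m + 2) + 1) then (1:ℤ) else 0)
      = (((Finset.range (m + 2)).filter
        fun σ => wmax u (σ + (m + 2)) < wlk u (σ + (m + 2) + 1)).card : ℤ) := by
    rw [Finset.card_filter]
    push_cast
    rfl
  rw [h2] at h
  omega


def Vld (u : Fin m → ZMod (m + 2)) (σ : ℕ) : Prop :=
  wlk u (σ + 1) = wlk u σ + 1 ∧
    ∀ j, j ≤ σ + (m + 2) → σ < j → wlk u j ≤ wlk u σ + 2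

lemma vld_iff_rec (u : Fin m → ZMod (m + 2)) {σ : ℕ} (hσ : σ < m + 2) :
    Vld u σ ↔ wmax u (σ + (m + 2)) < wlk u (σ + (m + 2) + 1) := by
  constructor
  · rintro ⟨h1, h2⟩
    have hval : wlk u (σ + (m + 2) + 1) = wlk u σ + 3 := by
      have : σ + (m + 2) + 1 = (σ + 1) + (m + 2) := by omega
      rw [this, wlk_period, h1]
      ring
    rw [hval]
    unfold wmax
    rw [Finset.sup'_lt_iff]
    intro i hi
    have hile : i ≤ σ + (m + 2) := by have := Finset.mem_range.mp hi; omega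
    rcases le_or_gt i σ with h | h
    · have hiN : σ < i + (m + 2) := by omega
      have hiN2 : i + (m + 2) ≤ σ + (m + 2) := by omega
      have := h2 (i + (m + 2)) hiN2 hiN
      have := wlk_period u i
      omega
    · have := h2 i hile h
      omega
  · intro h
    have hA : wlk u (σ + (m + 2)) ≤ wmax u (σ + (m + 2)) := le_wmax u le_rfl
    have hstep : wlk u (σ + (m + 2) + 1) ≤ wlk u (σ + (m + 2)) + 1 := wlk_step_le u _
    have p1 : wlk u ((σ + 1) + (m + 2)) = wlk u (σ + 1) + 2 := wlk_period u _
    have p2 : wlk u (σ + (m + 2)) = wlk u σ + 2 := wlk_period u σ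
    have hrw : (σ + 1) + (m + 2) = σ + (m + 2) + 1 := by omega
    rw [hrw] at p1
    constructor
    · omega
    · intro j hj1 hj2
      have := le_wmax u (i := j) (j := σ + (m + 2)) hj1
      omega

lemma cnt_shift (u : Fin m → ZMod (m + 2)) (σ r : ℕ) :
    cnt (fun k => u k - (σ : ZMod (m + 2))) r = cnt u (σ + r) := by
  unfold cnt
  congr 1
  apply filter_congr
  intro k _
  rw [sub_eq_iff_eq_add, Nat.cast_add, add_comm ((σ : ZMod (m+2))) ((r : ZMod (m+2)))]

lemma wlk_shift (u : Fin m → ZMod (m + 2)) (σ : ℕ) :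
    ∀ j, wlk (fun k => u k - (σ : ZMod (m + 2))) j = wlk u (σ + j) - wlk u σ := by
  intro j
  induction j with
  | zero => simp [wlk_zero]
  | succ j ih =>
    rw [wlk_succ, ih, cnt_shift]
    have h := wlk_succ u (σ + j)
    have : σ + (j + 1) = (σ + j) + 1 := by omega
    rw [this, h]
    ring

def Vf (u : Fin m → ZMod (m + 2)) : Prop :=
  (∀ k, (u k).val ≠ 0) ∧
    ∀ i, i ≤ m + 1 → 1 ≤ i →
      i - 1 ≤ (Finset.univ.filter fun k => (u k).val ≤ i).card

lemma vf_iff_vld_zero (u : Fin m → ZMod (m + 2)) : Vf u ↔ Vld u 0 := by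
  have hc0 : cnt u 0 = 0 ↔ ∀ k, (u k).val ≠ 0 := by
    unfold cnt
    rw [Finset.card_eq_zero, Finset.filter_eq_empty_iff]
    constructor
    · intro h k hk
      exact h (Finset.mem_univ k) (by rwa [Nat.cast_zero, ← ZMod.val_eq_zero])
    · intro h k _
      rw [Nat.cast_zero, ← ZMod.val_eq_zero]
      exact h k
  have hw1 : wlk u (0 + 1) = wlk u 0 + 1 - cnt u 0 := wlk_succ u 0
  have hz : wlk u 0 = 0 := wlk_zero u
  have hwi : ∀ i, 1 ≤ i → i ≤ m + 1 →
      wlk u (i + 1) = (i + 1 : ℤ) - ((Finset.univ.filter fun k => (u k).val ≤ i).card : ℤ) := by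
    intro i h1 h2
    unfold wlk
    rw [show ∑ r ∈ Finset.range (i + 1), ((cnt u r : ℤ))
        = ((∑ r ∈ Finset.range (i + 1), cnt u r : ℕ) : ℤ) from (Nat.cast_sum _ _).symm,
      sum_cnt_le u (by omega)]
    push_cast
    ring
  constructor
  · rintro ⟨h0, hi⟩
    have hcnt : cnt u 0 = 0 := hc0.mpr h0
    constructor
    · omega
    · intro j hj1 hj2
      rcases Nat.eq_or_lt_of_le (Nat.one_le_iff_ne_zero.mpr (by omega) : 1 ≤ j) with h | h
      · rw [← h]
        show wlk u (0 + 1) ≤ wlk u 0 + 2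
        omega
      · have hj : j = (j - 1) + 1 := by omega
        have hb1 : 1 ≤ j - 1 := by omega
        have hb2 : j - 1 ≤ m + 1 := by omega
        have := hwi (j - 1) hb1 hb2
        have hcard := hi (j - 1) hb2 hb1
        have hcard' : ((j:ℤ) - 1) - 1 ≤ ((Finset.univ.filter fun k => (u k).val ≤ j - 1).card : ℤ) := by
          have : ((j - 1 - 1 : ℕ) : ℤ) ≤ _ := Int.ofNat_le.mpr hcard
          push_cast at this
          omega
        rw [hj, this]
        push_cast
        omega
  · rintro ⟨h1, h2⟩
    constructor
    · apply hc0.mp; omega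
    · intro i him hi1
      have hcond := h2 (i + 1) (by omega) (by omega)
      rw [hwi i hi1 him] at hcond
      have : (i : ℤ) - 1 ≤ ((Finset.univ.filter fun k => (u k).val ≤ i).card : ℤ) := by omega
      omega

lemma vf_sub_iff (u : Fin m → ZMod (m + 2)) {σ : ℕ} (hσ : σ < m + 2) :
    Vf (fun k => u k - (σ : ZMod (m + 2))) ↔ Vld u σ := by
  rw [vf_iff_vld_zero]
  unfold Vld
  have hs := wlk_shift u σ
  constructor
  · rintro ⟨h1, h2⟩
    rw [hs 1, hs 0] at h1
    constructor
    · have : σ + 0 = σ := by omega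
      rw [this] at h1
      omega
    · intro j hj1 hj2
      have := h2 (j - σ) (by omega) (by omega)
      rw [hs (j - σ), hs 0] at this
      have hrw : σ + (j - σ) = j := by omega
      have hrw0 : σ + 0 = σ := by omega
      rw [hrw, hrw0] at this
      omega
  · rintro ⟨h1, h2⟩
    constructor
    · rw [hs 1, hs 0]
      have : σ + 0 = σ := by omega
      rw [this]
      omega
    · intro j hj1 hj2
      rw [hs j, hs 0]
      have := h2 (σ + j) (by omega) (by omega)
      have hrw0 : σ + 0 = σ := by omega
      rw [hrw0]
      omega


instance (u : Fin m → ZMod (m + 2)) : DecidablePred (Vld u) := fun σ => by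
  unfold Vld; infer_instance

instance : DecidablePred (Vf (m := m)) := fun u => by
  unfold Vf; infer_instance

lemma card_vld (u : Fin m → ZMod (m + 2)) :
    ((Finset.range (m + 2)).filter fun σ => Vld u σ).card = 2 := by
  rw [Finset.filter_congr (fun σ hσ => vld_iff_rec u (Finset.mem_range.mp hσ))]
  exact card_rec u

lemma card_shift_vf (u : Fin m → ZMod (m + 2)) :
    (Finset.univ.filter fun c : ZMod (m + 2) => Vf (fun k => u k + c)).card = 2 := by
  refine Eq.trans ?_ (card_vld u)
  apply Finset.card_bij (fun c _ => (ZMod.val (-c)))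
  · intro c hc
    rw [Finset.mem_filter] at hc
    rw [Finset.mem_filter, Finset.mem_range]
    refine ⟨ZMod.val_lt _, ?_⟩
    rw [← vf_sub_iff u (ZMod.val_lt (-c))]
    have hrw : (fun k => u k - ((ZMod.val (-c) : ℕ) : ZMod (m + 2))) = fun k => u k + c := by
      funext k
      rw [ZMod.natCast_rightInverse (-c)]
      ring
    rw [hrw]
    exact hc.2
  · intro c _ c' _ h
    have := congrArg (fun t : ℕ => (t : ZMod (m + 2))) h
    simp only [ZMod.natCast_rightInverse (-c), ZMod.natCast_rightInverse (-c')] at this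
    exact neg_injective this
  · intro σ hσ
    rw [Finset.mem_filter, Finset.mem_range] at hσ
    refine ⟨-(σ : ZMod (m + 2)), ?_, ?_⟩
    · rw [Finset.mem_filter]
      refine ⟨Finset.mem_univ _, ?_⟩
      rw [show (fun k => u k + -(σ : ZMod (m + 2))) = fun k => u k - (σ : ZMod (m + 2)) by
        funext k; ring]
      exact (vf_sub_iff u hσ.1).mpr hσ.2
    · rw [neg_neg, ZMod.val_cast_of_lt hσ.1]

lemma card_vf (hm : 1 ≤ m) :
    (Finset.univ.filter fun u : Fin m → ZMod (m + 2) => Vf u).card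
      = 2 * (m + 2) ^ (m - 1) := by
  have step1 : ∀ c : ZMod (m + 2),
      (Finset.univ.filter fun u : Fin m → ZMod (m + 2) => Vf u).card
        = (Finset.univ.filter fun u : Fin m → ZMod (m + 2) => Vf (fun k => u k + c)).card := by
    intro c
    apply Finset.card_bij (fun u _ => fun k => u k - c)
    · intro u hu
      rw [Finset.mem_filter] at hu ⊢
      refine ⟨Finset.mem_univ _, ?_⟩
      rw [show (fun k => (fun k => u k - c) k + c) = u by funext k; ring]
      exact hu.2
    · intro u _ u' _ h
      funext k
      have := congrFun h k
      have := congrArg (fun t => t + c) this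
      simpa using this
    · intro v hv
      rw [Finset.mem_filter] at hv
      refine ⟨fun k => v k + c, ?_, ?_⟩
      · rw [Finset.mem_filter]
        exact ⟨Finset.mem_univ _, hv.2⟩
      · funext k; ring
  have key : (Finset.univ.filter fun u : Fin m → ZMod (m + 2) => Vf u).card * (m + 2)
      = 2 * (m + 2) ^ m := by
    calc (Finset.univ.filter fun u : Fin m → ZMod (m + 2) => Vf u).card * (m + 2)
        = ∑ _c : ZMod (m + 2), (Finset.univ.filter fun u : Fin m → ZMod (m + 2) => Vf u).card := by
          rw [Finset.sum_const, Finset.card_univ, ZMod.card, smul_eq_mul, mul_comm]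
      _ = ∑ c : ZMod (m + 2),
            (Finset.univ.filter fun u : Fin m → ZMod (m + 2) => Vf (fun k => u k + c)).card :=
          Finset.sum_congr rfl (fun c _ => step1 c)
      _ = ∑ c : ZMod (m + 2), ∑ u : Fin m → ZMod (m + 2),
            (if Vf (fun k => u k + c) then 1 else 0) :=
          Finset.sum_congr rfl (fun c _ => Finset.card_filter _ _)
      _ = ∑ u : Fin m → ZMod (m + 2), ∑ c : ZMod (m + 2),
            (if Vf (fun k => u k + c) then 1 else 0) := Finset.sum_comm
      _ = ∑ u : Fin m → ZMod (m + 2),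
            (Finset.univ.filter fun c : ZMod (m + 2) => Vf (fun k => u k + c)).card :=
          Finset.sum_congr rfl (fun u _ => (Finset.card_filter _ _).symm)
      _ = ∑ _u : Fin m → ZMod (m + 2), 2 :=
          Finset.sum_congr rfl (fun u _ => card_shift_vf u)
      _ = 2 * (m + 2) ^ m := by
          rw [Finset.sum_const, Finset.card_univ, Fintype.card_fun, ZMod.card,
            Fintype.card_fin, smul_eq_mul, mul_comm]
  have h2 : 2 * (m + 2) ^ m = (2 * (m + 2) ^ (m - 1)) * (m + 2) := by
    rw [mul_assoc, ← pow_succ]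
    congr 2
    omega
  exact Nat.eq_of_mul_eq_mul_right (by omega) (key.trans h2)

end PFAux

lemma PFAux.length_filter_ofFn (q : ℕ → Prop) [DecidablePred q] :
    ∀ {m : ℕ} (g : Fin m → ℕ),
      ((List.ofFn g).filter (fun x => decide (q x))).length
        = (Finset.univ.filter fun k => q (g k)).card
  | 0, g => by simp
  | (m + 1), g => by
    have ih := PFAux.length_filter_ofFn q (fun k : Fin m => g k.succ)
    rw [List.ofFn_succ, List.filter_cons]
    rw [Finset.card_filter, Fin.sum_univ_succ, ← Finset.card_filter, ← ih]
    by_cases h : q (g 0) <;> simp [h] <;> omega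

theorem stmt4 (n : ℕ) (hn : 2 ≤ n) :
    Set.ncard {l : List ℕ | IsPFList n l ∧ l.headI = 1} = 2 * (n + 1) ^ (n - 2) ∧
    (Set.ncard {l : List ℕ | IsPFList n l ∧ l.headI = 1} : ℝ) / ((n : ℝ) + 1) ^ (n - 1)
      = 2 / ((n : ℝ) + 1) := by
  obtain ⟨k, rfl⟩ : ∃ k, n = k + 2 := ⟨n - 2, by omega⟩
  have hset : {l : List ℕ | IsPFList (k + 2) l ∧ l.headI = 1}
      = (fun u : Fin (k + 1) → ZMod (k + 1 + 2) => 1 :: List.ofFn fun j => (u j).val) ''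
        {u | PFAux.Vf u} := by
    ext l
    simp only [Set.mem_setOf_eq, Set.mem_image]
    constructor
    · rintro ⟨⟨hlen, hmem, hcnt⟩, hhead⟩
      cases l with
      | nil => simp at hlen
      | cons a t =>
        have ha : a = 1 := hhead
        subst ha
        have ht : t.length = k + 1 := by
          simp only [List.length_cons] at hlen
          omega
        set u : Fin (k + 1) → ZMod (k + 1 + 2) :=
          fun j => ((t.get (Fin.cast ht.symm j) : ℕ) : ZMod (k + 1 + 2)) with hu_def
        have hval : ∀ j, (u j).val = t.get (Fin.cast ht.symm j) := by
          intro j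
          apply ZMod.val_cast_of_lt
          have hm : t.get (Fin.cast ht.symm j) ∈ (1 :: t) :=
            List.mem_cons_of_mem _ (t.get_mem _)
          have := (hmem _ hm).2
          omega
        have htof : t = List.ofFn (fun j => (u j).val) := by
          apply List.ext_get
          · simp [ht]
          · intro i h1 h2
            rw [List.get_ofFn, hval]
            exact congrArg t.get (Fin.ext (by simp))
        refine ⟨u, ⟨?_, ?_⟩, ?_⟩
        · intro j
          rw [hval]
          have hm : t.get (Fin.cast ht.symm j) ∈ (1 :: t) :=
            List.mem_cons_of_mem _ (t.get_mem _)
          have := (hmem _ hm).1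
          omega
        · intro i hi2 hi1
          have hc := hcnt i hi1 (by omega)
          rw [List.filter_cons] at hc
          have hd : (decide (1 ≤ i)) = true := by simpa using hi1
          rw [if_pos hd, List.length_cons] at hc
          rw [htof, PFAux.length_filter_ofFn (fun x => x ≤ i)] at hc
          omega
        · rw [← htof]
    · rintro ⟨u, hu, rfl⟩
      refine ⟨⟨?_, ?_, ?_⟩, rfl⟩
      · simp
      · intro x hx
        rcases List.mem_cons.mp hx with h | h
        · subst h; omega
        · obtain ⟨j, hj⟩ := List.mem_ofFn.mp h
          have hj' : (u j).val = x := hj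
          have h1 := hu.1 j
          have h2 := ZMod.val_lt (u j)
          omega
      · intro i hi1 hi2
        rw [List.filter_cons]
        have hd : (decide (1 ≤ i)) = true := by simpa using hi1
        rw [if_pos hd, List.length_cons]
        rw [PFAux.length_filter_ofFn (fun x => x ≤ i)]
        have := hu.2 i (by omega) hi1
        omega
  have hinj : Function.Injective
      (fun u : Fin (k + 1) → ZMod (k + 1 + 2) => 1 :: List.ofFn fun j => (u j).val) := by
    intro u v h
    simp only [List.cons.injEq, true_and] at h
    have h2 := List.ofFn_injective h
    funext j
    exact ZMod.val_injective _ (congrFun h2 j)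
  have h1 : Set.ncard {l : List ℕ | IsPFList (k + 2) l ∧ l.headI = 1}
      = 2 * (k + 1 + 2) ^ (k + 1 - 1) := by
    rw [hset, Set.ncard_image_of_injective _ hinj]
    have hcoe : {u : Fin (k + 1) → ZMod (k + 1 + 2) | PFAux.Vf u}
        = ↑(Finset.univ.filter fun u : Fin (k + 1) → ZMod (k + 1 + 2) => PFAux.Vf u) := by
      ext u; simp
    rw [hcoe, Set.ncard_coe_finset, PFAux.card_vf (by omega)]
  constructor
  · rw [h1]
    congr 2 <;> omega
  · rw [h1]
    have he : k + 1 - 1 = k := by omega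
    have he2 : k + 2 - 1 = k + 1 := by omega
    rw [he, he2]
    have hx : ((k : ℝ) + 2) + 1 ≠ 0 := by positivity
    push_cast
    rw [pow_succ]
    field_simp
    ring
end

section
/- Let n ≥ 1, let ε > 0, and let x = i/n for some integer 0 ≤ i ≤ n. For π chosen uniformly at random from PF_n, P( |F^π(x) − x| > ε ) ≤ 2n·e^{−2ε²n}, where F^π(x) = (1/n)·#{j : π_j ≤ nx}. -/
lemma bpos (p : ℝ) (hp0 : 0 ≤ p) (hp1 : p ≤ 1) (s : ℝ) :
    0 < 1 - p + p * Real.exp s := by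
  rcases le_total 1 (Real.exp s) with h | h
  · nlinarith
  · nlinarith [Real.exp_pos s]

lemma hoeffding_bernoulli (p : ℝ) (hp0 : 0 ≤ p) (hp1 : p ≤ 1) (t : ℝ) :
    1 - p + p * Real.exp t ≤ Real.exp (t * p + t ^ 2 / 8) := by
  set φ : ℝ → ℝ := fun s => p + s / 4 - p * Real.exp s / (1 - p + p * Real.exp s) with hφ
  have hgd : ∀ s : ℝ, HasDerivAt (fun u => 1 - p + p * Real.exp u) (p * Real.exp s) s := by
    intro s
    simpa using ((Real.hasDerivAt_exp s).const_mul p).const_add (1 - p)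
  have hφd : ∀ s : ℝ, HasDerivAt φ
      (1 / 4 - (1 - p) * (p * Real.exp s) / (1 - p + p * Real.exp s) ^ 2) s := by
    intro s
    have h1 : HasDerivAt (fun u : ℝ => p + u / 4) (1 / 4) s := by
      simpa using ((hasDerivAt_id s).div_const 4).const_add p
    have h2 : HasDerivAt (fun u => p * Real.exp u / (1 - p + p * Real.exp u))
        ((p * Real.exp s * (1 - p + p * Real.exp s) - p * Real.exp s * (p * Real.exp s)) /
          (1 - p + p * Real.exp s) ^ 2) s :=
      ((Real.hasDerivAt_exp s).const_mul p).div (hgd s) (bpos p hp0 hp1 s).ne'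
    have := h1.sub h2
    refine this.congr_deriv ?_
    field_simp
    ring
  have hφmono : Monotone φ := by
    apply monotone_of_hasDerivAt_nonneg hφd
    intro s
    have hb := bpos p hp0 hp1 s
    have he := Real.exp_pos s
    have h4 : (1 - p) * (p * Real.exp s) / (1 - p + p * Real.exp s) ^ 2 ≤ 1 / 4 := by
      rw [div_le_iff₀ (by positivity)]
      nlinarith [sq_nonneg (1 - p - p * Real.exp s)]
    simp only [Pi.zero_apply]
    linarith
  have hφ0 : φ 0 = 0 := by
    have : (1 : ℝ) - p + p * Real.exp 0 = 1 := by simp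
    simp only [hφ, Real.exp_zero, mul_one]
    field_simp
    ring
  set h : ℝ → ℝ := fun s => s * p + s ^ 2 / 8 - Real.log (1 - p + p * Real.exp s) with hh
  have hhd : ∀ s : ℝ, HasDerivAt h (φ s) s := by
    intro s
    have h1 : HasDerivAt (fun u : ℝ => u * p + u ^ 2 / 8) (p + s / 4) s := by
      have : HasDerivAt (fun u : ℝ => u * p) p s := by simpa using (hasDerivAt_id s).mul_const p
      have h2 : HasDerivAt (fun u : ℝ => u ^ 2 / 8) (s / 4) s := by
        have := ((hasDerivAt_pow 2 s).div_const 8)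
        exact this.congr_deriv (by push_cast; ring)
      exact this.add h2
    have h2 : HasDerivAt (fun u => Real.log (1 - p + p * Real.exp u))
        (p * Real.exp s / (1 - p + p * Real.exp s)) s :=
      (hgd s).log (bpos p hp0 hp1 s).ne'
    have := h1.sub h2
    exact this
  have h0 : h 0 = 0 := by simp [hh]
  have key : 0 ≤ h t := by
    rcases le_total 0 t with ht | ht
    · have hmono : MonotoneOn h (Set.Ici 0) := by
        apply monotoneOn_of_hasDerivWithinAt_nonneg (convex_Ici 0)
          (fun x _ => (hhd x).continuousAt.continuousWithinAt)
          (fun x _ => (hhd x).hasDerivWithinAt)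
        intro x hx
        rw [interior_Ici] at hx
        have := hφmono (le_of_lt hx)
        rw [hφ0] at this
        exact this
      have := hmono (Set.self_mem_Ici) (Set.mem_Ici.2 ht) ht
      rwa [h0] at this
    · have hant : AntitoneOn h (Set.Iic 0) := by
        apply antitoneOn_of_hasDerivWithinAt_nonpos (convex_Iic 0)
          (fun x _ => (hhd x).continuousAt.continuousWithinAt)
          (fun x _ => (hhd x).hasDerivWithinAt)
        intro x hx
        rw [interior_Iic] at hx
        have := hφmono (le_of_lt hx)
        rw [hφ0] at this
        exact this
      have := hant (Set.mem_Iic.2 ht) (Set.self_mem_Iic) ht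
      rwa [h0] at this
  have hlog : Real.log (1 - p + p * Real.exp t) ≤ t * p + t ^ 2 / 8 := by
    simp only [hh] at key; linarith
  calc 1 - p + p * Real.exp t = Real.exp (Real.log (1 - p + p * Real.exp t)) :=
        (Real.exp_log (bpos p hp0 hp1 t)).symm
    _ ≤ _ := Real.exp_le_exp.2 hlog


lemma aux_count (p : ℕ → Bool) : ∀ (n : ℕ) (l : List ℕ), l.length = n →
    (l.filter p).length =
      (Finset.univ.filter (fun j : Fin n => p (l.getD j 0) = true)).card := by
  intro n
  induction n with
  | zero =>
    intro l hl
    rw [List.length_eq_zero_iff] at hl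
    subst hl; simp
  | succ m ih =>
    intro l hl
    match l with
    | a :: l' =>
      simp only [List.length_cons, Nat.succ.injEq] at hl
      rw [Fin.card_filter_univ_succ' (fun j : Fin (m+1) => p ((a :: l').getD j 0) = true)]
      simp only [Fin.val_succ, Fin.val_zero, List.getD_cons_zero, List.getD_cons_succ]
      rw [List.filter_cons, ← ih l' hl]
      by_cases hpa : p a = true <;> simp [hpa] <;> omega

lemma card_lt_filter (n i : ℕ) (hi : i ≤ n) :
    (Finset.univ.filter (fun v : Fin n => (v : ℕ) < i)).card = i := by
  have h : (Finset.univ.filter (fun v : Fin n => (v : ℕ) < i)) =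
      (Finset.range i).attachFin
        (fun m hm => lt_of_lt_of_le (Finset.mem_range.mp hm) hi) := by
    ext v
    simp [Finset.mem_attachFin, Finset.mem_range, Finset.mem_filter]
  rw [h, Finset.card_attachFin, Finset.card_range]

open Finset in
lemma chernoff_count (n i : ℕ) (hi : i ≤ n) (c lam : ℝ) (hlam : 0 ≤ lam) :
    ((Finset.univ.filter (fun f : Fin n → Fin n =>
        c < ((Finset.univ.filter (fun j => ((f j : ℕ) < i))).card : ℝ))).card : ℝ) ≤
      Real.exp (-lam * c) * ((i : ℝ) * Real.exp lam + ((n : ℝ) - i)) ^ n := by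
  set T := Finset.univ.filter (fun f : Fin n → Fin n =>
      c < ((Finset.univ.filter (fun j => ((f j : ℕ) < i))).card : ℝ)) with hT
  set cnt : (Fin n → Fin n) → ℕ := fun f => (univ.filter (fun j => (f j : ℕ) < i)).card
    with hcnt
  have step1 : (T.card : ℝ) ≤ ∑ f : Fin n → Fin n, Real.exp (lam * ((cnt f : ℝ) - c)) := by
    have h1 : (T.card : ℝ) = ∑ _f ∈ T, (1 : ℝ) := by simp
    rw [h1]
    refine le_trans (Finset.sum_le_sum ?_)
      (Finset.sum_le_sum_of_subset_of_nonneg (Finset.subset_univ T)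
        (fun f _ _ => (Real.exp_pos _).le))
    intro f hf
    rw [hT, Finset.mem_filter] at hf
    have : (0 : ℝ) ≤ lam * ((cnt f : ℝ) - c) :=
      mul_nonneg hlam (by simpa [hcnt] using (sub_nonneg.mpr hf.2.le))
    exact Real.one_le_exp this
  have expand : ∀ f : Fin n → Fin n, Real.exp (lam * ((cnt f : ℝ) - c)) =
      Real.exp (-lam * c) *
        ∏ j, Real.exp (lam * (if (f j : ℕ) < i then (1 : ℝ) else 0)) := by
    intro f
    rw [← Real.exp_sum, ← Real.exp_add]
    congr 1
    have hsum : ((cnt f : ℝ)) = ∑ j, (if (f j : ℕ) < i then (1 : ℝ) else 0) := by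
      rw [Finset.sum_boole]
    rw [hsum, mul_sub, Finset.mul_sum]
    try ring
  have sum_v : ∑ v : Fin n, Real.exp (lam * (if (v : ℕ) < i then (1 : ℝ) else 0)) =
      (i : ℝ) * Real.exp lam + ((n : ℝ) - i) := by
    simp only [mul_ite, mul_one, mul_zero, apply_ite Real.exp, Real.exp_zero]
    rw [Finset.sum_ite, Finset.sum_const, Finset.sum_const]
    have h1 : (univ.filter (fun v : Fin n => (v : ℕ) < i)).card = i := card_lt_filter n i hi
    have h2 : (univ.filter (fun v : Fin n => ¬ (v : ℕ) < i)).card = n - i := by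
      have := Finset.card_filter_add_card_filter_not
        (s := (univ : Finset (Fin n))) (p := fun v : Fin n => (v : ℕ) < i)
      rw [h1] at this
      simp only [Finset.card_univ, Fintype.card_fin] at this
      omega
    rw [h1, h2]
    simp only [nsmul_eq_mul, smul_eq_mul, mul_one, Nat.cast_sub hi]
    try ring
  have prodsum : ∑ f : Fin n → Fin n,
      ∏ j, Real.exp (lam * (if (f j : ℕ) < i then (1 : ℝ) else 0)) =
      ((i : ℝ) * Real.exp lam + ((n : ℝ) - i)) ^ n := by
    rw [← sum_v, ← Fin.prod_const n, Finset.prod_univ_sum, Fintype.piFinset_univ]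
  calc (T.card : ℝ) ≤ ∑ f : Fin n → Fin n, Real.exp (lam * ((cnt f : ℝ) - c)) := step1
    _ = Real.exp (-lam * c) * ∑ f : Fin n → Fin n,
          ∏ j, Real.exp (lam * (if (f j : ℕ) < i then (1 : ℝ) else 0)) := by
        rw [Finset.mul_sum]; exact Finset.sum_congr rfl fun f _ => expand f
    _ = _ := by rw [prodsum]

theorem stmt12 (n i : ℕ) (hn : 1 ≤ n) (hi : i ≤ n) (ε : ℝ) (hε : 0 < ε) :
    (Set.ncard {l : List ℕ | IsPFList n l ∧
        |((l.filter (fun x => x ≤ i)).length : ℝ) / (n : ℝ) - (i : ℝ) / (n : ℝ)| > ε} : ℝ) /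
        ((n : ℝ) + 1) ^ (n - 1)
      ≤ 2 * (n : ℝ) * Real.exp (-2 * ε ^ 2 * n) := by
  have hn0 : (0 : ℝ) < n := by exact_mod_cast hn
  have hin : (i : ℝ) ≤ n := by exact_mod_cast hi
  have hn1R : (1 : ℝ) ≤ n := by exact_mod_cast hn
  have hgetD : ∀ (l : List ℕ) (j : ℕ) (h : j < l.length), l.getD j 0 = l[j]'h := by
    intro l j h
    simp [List.getD_eq_getElem?_getD, List.getElem?_eq_getElem h]
  set S := {l : List ℕ | IsPFList n l ∧
      |((l.filter (fun x => x ≤ i)).length : ℝ) / (n : ℝ) - (i : ℝ) / (n : ℝ)| > ε} with hS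
  set lam : ℝ := 4 * ε with hlam
  set c : ℝ := (i : ℝ) + ε * n with hc
  set F : List ℕ → (Fin n → Fin n) := fun l j =>
    ⟨min (l.getD j 0 - 1) (n - 1), by omega⟩ with hF
  set T := Finset.univ.filter (fun f : Fin n → Fin n =>
      c < ((Finset.univ.filter (fun j => ((f j : ℕ) < i))).card : ℝ)) with hT
  have hmaps : ∀ l ∈ S, F l ∈ (↑T : Set (Fin n → Fin n)) := by
    intro l hl
    obtain ⟨⟨hlen, hmem, hcl⟩, hev⟩ := hl
    have hbd : ∀ j : Fin n, 1 ≤ l.getD j 0 ∧ l.getD j 0 ≤ n := by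
      intro j
      have hj : (j : ℕ) < l.length := by omega
      rw [hgetD l j hj]
      exact hmem _ (List.getElem_mem hj)
    have hiff : ∀ j : Fin n, ((F l j : ℕ) < i) ↔ (l.getD j 0 ≤ i) := by
      intro j
      obtain ⟨h1, h2⟩ := hbd j
      have hfv : ((F l j : ℕ)) = min (l.getD j 0 - 1) (n - 1) := rfl
      rw [hfv]
      omega
    have hcard : ((Finset.univ.filter (fun j : Fin n => ((F l j : ℕ) < i))).card) =
        (l.filter (fun x => x ≤ i)).length := by
      rw [aux_count (fun x => x ≤ i) n l hlen]
      congr 1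
      apply Finset.filter_congr
      intro j _
      rw [hiff j]
      simp
    have hge : i ≤ (l.filter (fun x => x ≤ i)).length := by
      rcases Nat.eq_zero_or_pos i with h | h
      · omega
      · exact hcl i h hi
    have hgeR : (i : ℝ) ≤ ((l.filter (fun x => x ≤ i)).length : ℝ) := by exact_mod_cast hge
    have habs : ((l.filter (fun x => x ≤ i)).length : ℝ) / n - (i : ℝ) / n =
        (((l.filter (fun x => x ≤ i)).length : ℝ) - i) / n := by
      rw [div_sub_div_same]
    rw [habs, abs_of_nonneg (div_nonneg (by linarith) hn0.le)] at hev
    have hev2 : ε * n < ((l.filter (fun x => x ≤ i)).length : ℝ) - i :=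
      (lt_div_iff₀ hn0).mp hev
    rw [Finset.mem_coe, hT, Finset.mem_filter]
    refine ⟨Finset.mem_univ _, ?_⟩
    rw [hcard]
    rw [hc]
    linarith
  have hinj : Set.InjOn F S := by
    intro l1 hl1 l2 hl2 heq
    obtain ⟨⟨hlen1, hmem1, -⟩, -⟩ := hl1
    obtain ⟨⟨hlen2, hmem2, -⟩, -⟩ := hl2
    apply List.ext_getElem (by rw [hlen1, hlen2])
    intro j hj1 hj2
    have hj : j < n := by omega
    have hfj := congrFun heq ⟨j, hj⟩
    simp only [hF, Fin.mk.injEq] at hfj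
    have e1 := hgetD l1 j (by omega)
    have e2 := hgetD l2 j (by omega)
    have b1 := hmem1 _ (List.getElem_mem hj1)
    have b2 := hmem2 _ (List.getElem_mem hj2)
    rw [e1, e2] at hfj
    omega
  have h1 : S.ncard ≤ T.card := by
    have := Set.ncard_le_ncard_of_injOn F hmaps hinj T.finite_toSet
    rwa [Set.ncard_coe_finset] at this
  have hn1 : (0 : ℝ) < (n : ℝ) + 1 := by positivity
  have hp0 : 0 ≤ (i : ℝ) / ((n : ℝ) + 1) := by positivity
  have hp1 : (i : ℝ) / ((n : ℝ) + 1) ≤ 1 := by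
    rw [div_le_one hn1]; linarith
  have hb := hoeffding_bernoulli _ hp0 hp1 lam
  have h3 : (i : ℝ) * Real.exp lam + ((n : ℝ) - i) ≤
      ((n : ℝ) + 1) * Real.exp (lam * ((i : ℝ) / ((n : ℝ) + 1)) + lam ^ 2 / 8) := by
    have h := mul_le_mul_of_nonneg_left hb hn1.le
    have heq : ((n : ℝ) + 1) * (1 - (i : ℝ) / ((n : ℝ) + 1) +
        (i : ℝ) / ((n : ℝ) + 1) * Real.exp lam) =
        ((n : ℝ) + 1 - (i : ℝ)) + (i : ℝ) * Real.exp lam := by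
      field_simp
      try ring
    rw [heq] at h
    linarith
  have hnonneg : 0 ≤ (i : ℝ) * Real.exp lam + ((n : ℝ) - i) := by
    have := Real.exp_pos lam
    have hi0 : (0 : ℝ) ≤ i := Nat.cast_nonneg i
    nlinarith
  have h4 := pow_le_pow_left₀ hnonneg h3 n
  have h5 : (((n : ℝ) + 1) * Real.exp (lam * ((i : ℝ) / ((n : ℝ) + 1)) + lam ^ 2 / 8)) ^ n =
      ((n : ℝ) + 1) ^ n *
        Real.exp ((n : ℝ) * (lam * ((i : ℝ) / ((n : ℝ) + 1)) + lam ^ 2 / 8)) := by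
    rw [mul_pow, ← Real.exp_nat_mul]
  have hpow : ((n : ℝ) + 1) ^ n = ((n : ℝ) + 1) ^ (n - 1) * ((n : ℝ) + 1) := by
    rw [← pow_succ, Nat.sub_add_cancel hn]
  have hexp : -lam * c + (n : ℝ) * (lam * ((i : ℝ) / ((n : ℝ) + 1)) + lam ^ 2 / 8) ≤
      -2 * ε ^ 2 * n := by
    have hkey : (n : ℝ) * ((i : ℝ) / ((n : ℝ) + 1)) ≤ (i : ℝ) := by
      rw [mul_div_assoc', div_le_iff₀ hn1]
      nlinarith [Nat.cast_nonneg (α := ℝ) i]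
    have h2 := mul_le_mul_of_nonneg_left hkey (by linarith : (0 : ℝ) ≤ 4 * ε)
    rw [hlam, hc]
    nlinarith
  rw [div_le_iff₀ (by positivity : (0 : ℝ) < ((n : ℝ) + 1) ^ (n - 1))]
  calc (S.ncard : ℝ) ≤ (T.card : ℝ) := by exact_mod_cast h1
    _ ≤ Real.exp (-lam * c) * ((i : ℝ) * Real.exp lam + ((n : ℝ) - i)) ^ n := by
        rw [hT]
        exact chernoff_count n i hi c lam (by linarith)
    _ ≤ Real.exp (-lam * c) *
          (((n : ℝ) + 1) * Real.exp (lam * ((i : ℝ) / ((n : ℝ) + 1)) + lam ^ 2 / 8)) ^ n :=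
        mul_le_mul_of_nonneg_left h4 (Real.exp_pos _).le
    _ = ((n : ℝ) + 1) ^ (n - 1) * (((n : ℝ) + 1) *
          Real.exp (-lam * c + (n : ℝ) * (lam * ((i : ℝ) / ((n : ℝ) + 1)) + lam ^ 2 / 8))) := by
        rw [h5, hpow, Real.exp_add]
        ring
    _ ≤ ((n : ℝ) + 1) ^ (n - 1) * (2 * (n : ℝ) * Real.exp (-2 * ε ^ 2 * n)) := by
        refine mul_le_mul_of_nonneg_left ?_ (by positivity)
        have e1 := Real.exp_le_exp.2 hexp
        have e2 : (n : ℝ) + 1 ≤ 2 * n := by linarith [hn1R]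
        have := mul_le_mul e2 e1 (Real.exp_pos _).le (by linarith)
        linarith
    _ = 2 * (n : ℝ) * Real.exp (-2 * ε ^ 2 * n) * ((n : ℝ) + 1) ^ (n - 1) := by ring
end

section
/- Fix an integer j ≥ 0. For π chosen uniformly at random from PF_n, let R(π) = #{i ∈ {1, …, n−1} : π_i = π_{i+1}} be the number of repeats of π read left to right. Then P(R(π) = j) converges to 1/(e·j!) as n → ∞. -/
/-- The number of repeats `π_i = π_{i+1}` of a list, read left to right. -/
def repeatCount (l : List ℕ) : ℕ :=
  ((l.zip l.tail).filter (fun p => p.1 = p.2)).length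

open Finset

def repC {α : Type*} [DecidableEq α] (l : List α) : ℕ :=
  ((l.zip l.tail).filter (fun p => p.1 = p.2)).length

lemma repeatCount_eq_repC (l : List ℕ) : repeatCount l = repC l := rfl

lemma lenfilter {n : ℕ} {α : Type*} (f : Fin n → α) (p : α → Bool) :
    ((List.ofFn f).filter p).length = (univ.filter (fun i => p (f i) = true)).card := by
  rw [List.ofFn_eq_map, List.filter_map, List.length_map, Fin.univ_def]
  simp [Finset.filter, Finset.card, Function.comp]
  rfl

lemma repC_map {α β : Type*} [DecidableEq α] [DecidableEq β] (f : α → β)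
    (hf : Function.Injective f) (l : List α) : repC (l.map f) = repC l := by
  unfold repC
  rw [← List.map_tail, List.zip_map, List.filter_map, List.length_map]
  congr 1
  apply List.filter_congr
  intro p _
  simp [Prod.map, hf.eq_iff]

lemma zip_ofFn {α : Type*} : ∀ {M : ℕ} (f : Fin (M + 1) → α) (g : Fin M → α),
    (List.ofFn f).zip (List.ofFn g) = List.ofFn (fun i : Fin M => (f i.castSucc, g i)) := by
  intro M
  induction M with
  | zero => intro f g; simp
  | succ M ih =>
    intro f g
    rw [List.ofFn_succ (f := f), List.ofFn_succ (f := g), List.zip_cons_cons, ih]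
    rw [List.ofFn_succ (f := fun i : Fin (M+1) => (f i.castSucc, g i))]
    congr 1

lemma repC_ofFn {α : Type*} [DecidableEq α] {M : ℕ} (w : Fin (M + 1) → α) :
    repC (List.ofFn w) = (univ.filter (fun i : Fin M => w i.castSucc = w i.succ)).card := by
  unfold repC
  have ht : (List.ofFn w).tail = List.ofFn (fun i : Fin M => w i.succ) := by
    rw [List.ofFn_succ]; rfl
  rw [ht, zip_ofFn, lenfilter]
  simp



section zerocount
variable {ι β : Type*} [Fintype ι] [DecidableEq ι] [Fintype β] [DecidableEq β]

lemma fiber_card_s14 (b₀ : β) (S : Finset ι) :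
    Fintype.card {d : ι → β // univ.filter (fun i => d i = b₀) = S}
      = (Fintype.card β - 1) ^ (Fintype.card ι - S.card) := by
  have e : {d : ι → β // univ.filter (fun i => d i = b₀) = S}
      ≃ ({i : ι // i ∉ S} → {b : β // b ≠ b₀}) :=
    { toFun := fun d i => ⟨d.1 i.1, by
        have := d.2
        intro h
        have : i.1 ∈ univ.filter (fun i => d.1 i = b₀) := by simp [h]
        rw [d.2] at this
        exact i.2 this⟩
      invFun := fun g => ⟨fun i => if h : i ∈ S then b₀ else (g ⟨i, h⟩).1, by
        ext i
        simp only [mem_filter, mem_univ, true_and]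
        by_cases h : i ∈ S
        · simp [h]
        · simp only [h, iff_false, dif_neg h]
          exact (g ⟨i, h⟩).2⟩
      left_inv := by
        rintro ⟨d, hd⟩
        apply Subtype.ext
        funext i
        by_cases h : i ∈ S
        · have h' := h
          rw [← hd] at h'
          simp only [mem_filter, mem_univ, true_and] at h'
          simp [h, h']
        · simp [h]
      right_inv := by
        intro g
        funext i
        apply Subtype.ext
        simp [i.2] }
  rw [Fintype.card_congr e, Fintype.card_fun]
  congr 1
  · rw [Fintype.card_subtype_compl, Fintype.card_subtype_eq]
  · rw [Fintype.card_subtype_compl, Fintype.card_coe]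

lemma zeros_card (b₀ : β) (j : ℕ) :
    Fintype.card {d : ι → β // (univ.filter (fun i => d i = b₀)).card = j}
      = (Fintype.card ι).choose j * (Fintype.card β - 1) ^ (Fintype.card ι - j) := by
  rw [Fintype.card_subtype]
  rw [Finset.card_eq_sum_card_fiberwise
    (f := fun d : ι → β => univ.filter (fun i => d i = b₀))
    (t := univ.powersetCard j)
    (by intro d hd
        simp only [Finset.mem_coe, mem_filter, mem_univ, true_and] at hd
        simp [Finset.mem_powersetCard, hd])]
  have hterm : ∀ S ∈ univ.powersetCard j,
      ((univ.filter (fun d : ι → β => (univ.filter (fun i => d i = b₀)).card = j)).filter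
        (fun d => univ.filter (fun i => d i = b₀) = S)).card
      = (Fintype.card β - 1) ^ (Fintype.card ι - j) := by
    intro S hS
    rw [Finset.mem_powersetCard] at hS
    rw [Finset.filter_filter]
    have : (univ.filter fun d : ι → β =>
        (univ.filter (fun i => d i = b₀)).card = j ∧ univ.filter (fun i => d i = b₀) = S)
        = univ.filter (fun d : ι → β => univ.filter (fun i => d i = b₀) = S) := by
      apply Finset.filter_congr
      intro d _
      constructor
      · exact fun h => h.2
      · exact fun h => ⟨by rw [h, hS.2], h⟩
    rw [this, ← Fintype.card_subtype, fiber_card_s14, hS.2]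
  rw [Finset.sum_congr rfl hterm, Finset.sum_const, Finset.card_powersetCard,
    Finset.card_univ, smul_eq_mul]
end zerocount

section cardrep
variable {α : Type*} [AddCommGroup α] [Fintype α] [DecidableEq α]

def repCF {M : ℕ} (w : Fin (M + 1) → α) : ℕ :=
  (univ.filter (fun i : Fin M => w i.castSucc = w i.succ)).card

lemma theta_bij (M : ℕ) :
    Function.Bijective (fun w : Fin (M + 1) → α =>
      ((w 0, fun i : Fin M => w i.succ - w i.castSucc) : α × (Fin M → α))) := by
  rw [Fintype.bijective_iff_injective_and_card]
  constructor
  · intro w w' h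
    simp only [Prod.mk.injEq] at h
    funext i
    induction i using Fin.induction with
    | zero => exact h.1
    | succ i ih =>
      have hd := congrFun h.2 i
      rw [ih] at hd
      exact sub_left_inj.mp hd
  · simp [Fintype.card_fun, pow_succ, mul_comm]

lemma card_rep (M j : ℕ) :
    Fintype.card {w : Fin (M + 1) → α // repCF w = j}
      = Fintype.card α * (M.choose j * (Fintype.card α - 1) ^ (M - j)) := by
  classical
  let e := Equiv.ofBijective _ (theta_bij (α := α) M)
  have key : ∀ w : Fin (M + 1) → α,
      repCF w = j ↔ (univ.filter (fun i : Fin M => (e w).2 i = 0)).card = j := by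
    intro w
    unfold repCF
    have : (univ.filter (fun i : Fin M => w i.castSucc = w i.succ))
        = (univ.filter (fun i : Fin M => (e w).2 i = 0)) := by
      apply Finset.filter_congr
      intro i _
      simp only [e, Equiv.ofBijective_apply]
      constructor
      · intro h; rw [h, sub_self]
      · intro h; exact (sub_eq_zero.mp h).symm
    rw [this]
  have e2 : {w : Fin (M + 1) → α // repCF w = j}
      ≃ {p : α × (Fin M → α) // (univ.filter (fun i : Fin M => p.2 i = 0)).card = j} :=
    (Equiv.subtypeEquiv e key)
  have e3 : {p : α × (Fin M → α) // (univ.filter (fun i : Fin M => p.2 i = 0)).card = j}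
      ≃ α × {d : Fin M → α // (univ.filter (fun i : Fin M => d i = 0)).card = j} :=
    { toFun := fun p => (p.1.1, ⟨p.1.2, p.2⟩)
      invFun := fun q => ⟨(q.1, q.2.1), q.2.2⟩
      left_inv := fun p => rfl
      right_inv := fun q => rfl }
  rw [Fintype.card_congr (e2.trans e3), Fintype.card_prod]
  congr 1
  rw [zeros_card (0 : α) j, Fintype.card_fin]
end cardrep



section cycle
variable {n : ℕ}

/-- multiplicity of a value -/
def mcount (u : Fin n → ZMod (n + 1)) (x : ZMod (n + 1)) : ℕ :=
  (univ.filter (fun k => u k = x)).card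

/-- window sum of multiplicities starting at position p -/
def Wsum (u : Fin n → ZMod (n + 1)) (p t : ℕ) : ℕ :=
  ∑ s ∈ range t, mcount u ((p + s : ℕ) : ZMod (n + 1))

lemma wsum_full (u : Fin n → ZMod (n + 1)) (x : ℕ) : Wsum u x (n + 1) = n := by
  unfold Wsum
  have h1 : ∑ s ∈ range (n + 1), mcount u ((x + s : ℕ) : ZMod (n + 1))
      = ∑ z : ZMod (n + 1), mcount u z := by
    apply Finset.sum_nbij' (i := fun s => ((x + s : ℕ) : ZMod (n + 1)))
      (j := fun z => ((z - (x : ℕ)).val))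
    · intro s hs; exact mem_univ _
    · intro z hz
      simp only [mem_range]
      exact ZMod.val_lt _
    · intro s hs
      simp only [mem_range] at hs
      push_cast
      have : ((x : ZMod (n+1)) + s - x) = (s : ZMod (n+1)) := by ring
      rw [this, ZMod.val_natCast_of_lt hs]
    · intro z hz
      push_cast
      rw [ZMod.natCast_val, ZMod.cast_id]
      ring
    · intro s hs; rfl
  rw [h1]
  unfold mcount
  rw [← Finset.card_eq_sum_card_fiberwise (f := u) (s := univ) (t := univ)
    (fun k _ => mem_univ _)]
  simp

lemma wsum_add (u : Fin n → ZMod (n + 1)) (p a b : ℕ) :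
    Wsum u p (a + b) = Wsum u p a + ∑ s ∈ range b, mcount u ((p + a + s : ℕ) : ZMod (n + 1)) := by
  unfold Wsum
  rw [Finset.sum_range_add]
  congr 1
  apply Finset.sum_congr rfl
  intro s _
  congr 2
  omega

/-- counting lemma: the number of k with (u k + c).val ≤ t equals a window sum -/
lemma cnt_eq (u : Fin n → ZMod (n + 1)) (c : ZMod (n + 1)) (t : ℕ) (ht : t ≤ n) :
    (univ.filter (fun k => (u k + c).val ≤ t)).card = Wsum u ((-c).val) (t + 1) := by
  have hterm : ∀ s : ℕ, s ≤ n → (((-c).val + s : ℕ) : ZMod (n + 1)) = (s : ℕ) - c := by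
    intro s _
    push_cast
    rw [ZMod.natCast_val, ZMod.cast_id]
    ring
  induction t with
  | zero =>
    unfold Wsum mcount
    rw [Finset.sum_range_one, hterm 0 (by omega)]
    congr 1
    apply Finset.filter_congr
    intro k _
    simp only [Nat.le_zero]
    rw [ZMod.val_eq_zero]
    constructor
    · intro h; push_cast; linear_combination h
    · intro h
      have h2 : u k + c = 0 := by push_cast at h ⊢; linear_combination h
      rw [h2]
  | succ t ih =>
    have ht' : t ≤ n := by omega
    have hsplit : (univ.filter (fun k => (u k + c).val ≤ t + 1))
        = (univ.filter (fun k => (u k + c).val ≤ t))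
          ∪ (univ.filter (fun k => (u k + c).val = t + 1)) := by
      rw [← Finset.filter_or]
      apply Finset.filter_congr
      intro k _
      constructor
      · intro h; omega
      · intro h; omega
    rw [hsplit, Finset.card_union_of_disjoint, ih ht']
    · have hW : Wsum u (-c).val (t + 1 + 1)
          = Wsum u (-c).val (t + 1) + mcount u (((-c).val + (t + 1) : ℕ) : ZMod (n + 1)) := by
        unfold Wsum
        rw [Finset.sum_range_succ]
      rw [hW]
      congr 1
      unfold mcount
      rw [hterm (t+1) ht]
      congr 1
      apply Finset.filter_congr
      intro k _
      constructor
      · intro h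
        have h1 : u k + c = ((t + 1 : ℕ) : ZMod (n + 1)) := by
          apply ZMod.val_injective
          rw [h, ZMod.val_cast_of_lt (show t + 1 < n + 1 by omega)]
        push_cast at h1 ⊢
        linear_combination h1
      · intro h
        have h1 : u k + c = ((t + 1 : ℕ) : ZMod (n + 1)) := by
          push_cast at h ⊢; linear_combination h
        rw [h1, ZMod.val_cast_of_lt (show t + 1 < n + 1 by omega)]
    · rw [Finset.disjoint_filter]
      intro k _ h1
      omega


def Hfun (u : Fin n → ZMod (n + 1)) (x : ℕ) : ℤ := (Wsum u 0 x : ℤ) - x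

lemma wsum_zero_split (u : Fin n → ZMod (n + 1)) (p t : ℕ) :
    Wsum u 0 (p + t) = Wsum u 0 p + Wsum u p t := by
  rw [wsum_add]
  congr 1
  unfold Wsum
  apply Finset.sum_congr rfl
  intro s _
  congr 2
  omega

lemma hfun_period (u : Fin n → ZMod (n + 1)) (x : ℕ) :
    Hfun u (x + (n + 1)) = Hfun u x - 1 := by
  unfold Hfun
  have h := wsum_zero_split u x (n + 1)
  rw [h, wsum_full]
  push_cast
  ring

lemma wsum_le_iff (u : Fin n → ZMod (n + 1)) (p s : ℕ) :
    s ≤ Wsum u p s ↔ Hfun u p ≤ Hfun u (p + s) := by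
  unfold Hfun
  rw [wsum_zero_split u p s]
  push_cast
  omega

lemma exists_unique_p (u : Fin n → ZMod (n + 1)) :
    ∃! p : ℕ, p < n + 1 ∧ ∀ s, 1 ≤ s → s ≤ n → Hfun u p ≤ Hfun u (p + s) := by
  have key : ∀ a b : ℕ, a < b → b < n + 1 →
      (∀ s, 1 ≤ s → s ≤ n → Hfun u a ≤ Hfun u (a + s)) →
      (∀ s, 1 ≤ s → s ≤ n → Hfun u b ≤ Hfun u (b + s)) → False := by
    intro a b hab hb ha hbR
    have h1 : Hfun u a ≤ Hfun u b := by
      have := ha (b - a) (by omega) (by omega)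
      rwa [show a + (b - a) = b by omega] at this
    have h2 : Hfun u b ≤ Hfun u (a + (n + 1)) := by
      have := hbR (a + (n + 1) - b) (by omega) (by omega)
      rwa [show b + (a + (n + 1) - b) = a + (n + 1) by omega] at this
    have h3 := hfun_period u a
    omega
  obtain ⟨x₀, hx₀, hmin⟩ := Finset.exists_min_image (range (n + 1)) (Hfun u)
    ⟨0, by simp⟩
  letI : DecidablePred (fun x : ℕ => ∀ y ∈ range (n + 1), Hfun u x ≤ Hfun u y) :=
    fun x => Finset.decidableDforallFinset
  set T := (range (n + 1)).filter (fun x => ∀ y ∈ range (n + 1), Hfun u x ≤ Hfun u y) with hT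
  have hTne : T.Nonempty := ⟨x₀, by
    rw [hT, mem_filter]
    exact ⟨hx₀, hmin⟩⟩
  set p := T.min' hTne with hpdef
  have hpT : p ∈ T := T.min'_mem hTne
  rw [hT, mem_filter, mem_range] at hpT
  obtain ⟨hp, hpmin⟩ := hpT
  have hRp : ∀ s, 1 ≤ s → s ≤ n → Hfun u p ≤ Hfun u (p + s) := by
    intro s hs1 hs2
    by_cases hc : p + s < n + 1
    · exact hpmin _ (mem_range.mpr hc)
    · set z := p + s - (n + 1) with hzdef
      have hz : z < p := by omega
      have hzr : z < n + 1 := by omega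
      have heq : Hfun u (p + s) = Hfun u z - 1 := by
        have := hfun_period u z
        rwa [show z + (n + 1) = p + s by omega] at this
      have hz1 : Hfun u p ≤ Hfun u z := hpmin _ (mem_range.mpr hzr)
      have hne : Hfun u p ≠ Hfun u z := by
        intro hEq
        have hzT : z ∈ T := by
          rw [hT, mem_filter, mem_range]
          exact ⟨hzr, fun y hy => hEq ▸ hpmin y hy⟩
        have := T.min'_le z hzT
        omega
      omega
  refine ⟨p, ⟨hp, hRp⟩, ?_⟩
  rintro q ⟨hq, hRq⟩
  rcases lt_trichotomy q p with h | h | h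
  · exact absurd (key q p h hp hRq hRp) (not_false)
  · exact h
  · exact absurd (key p q h hq hRp hRq) (not_false)


end cycle
section bridge
open Finset
variable {n : ℕ}

lemma val_sub_one (hn : 1 ≤ n) (x : ZMod (n + 1)) {t : ℕ} (ht : t < n) :
    (x - 1).val ≤ t ↔ (1 ≤ x.val ∧ x.val ≤ t + 1) := by
  by_cases hx : x = 0
  · subst hx
    have h1 : (0 - 1 : ZMod (n + 1)).val = n := by
      rw [zero_sub, ZMod.val_neg_one]
    rw [h1]
    simp
    omega
  · set a := x.val with ha
    have ha1 : 1 ≤ a := by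
      have := ZMod.val_pos.mpr hx
      omega
    have ha2 : a < n + 1 := ZMod.val_lt x
    have hx2 : x = (a : ZMod (n + 1)) := by
      rw [ha, ZMod.natCast_val, ZMod.cast_id]
    have hsub : x - 1 = ((a - 1 : ℕ) : ZMod (n + 1)) := by
      rw [hx2]
      have : (((a - 1 : ℕ)) : ZMod (n+1)) = ((a : ℕ) : ZMod (n+1)) - 1 := by
        push_cast [Nat.cast_sub ha1]
        ring
      rw [this]
    rw [hsub, ZMod.val_cast_of_lt (show a - 1 < n + 1 by omega)]
    omega

lemma PF_iff (hn : 1 ≤ n) (v : Fin n → ZMod (n + 1)) :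
    IsPFList n (List.ofFn fun i => (v i).val) ↔
      ∀ t, t < n → t + 1 ≤ (univ.filter (fun k => (v k - 1).val ≤ t)).card := by
  constructor
  · rintro ⟨hlen, hmem, hcnt⟩ t ht
    have hge1 : ∀ k, 1 ≤ (v k).val := by
      intro k
      refine (hmem _ ?_).1
      rw [List.mem_ofFn]
      exact ⟨k, rfl⟩
    have h1 := hcnt (t + 1) (by omega) (by omega)
    rw [lenfilter] at h1
    have h3 : (univ.filter (fun k => decide ((v k).val ≤ t + 1) = true))
        = (univ.filter (fun k => (v k - 1).val ≤ t)) := by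
      apply Finset.filter_congr
      intro k _
      rw [val_sub_one hn _ ht]
      have := hge1 k
      simp only [decide_eq_true_eq]
      omega
    rw [h3] at h1
    exact h1
  · intro hQ
    have hall : ∀ k, 1 ≤ (v k).val ∧ (v k).val ≤ n := by
      have h1 := hQ (n - 1) (by omega)
      have h2 : (univ.filter (fun k => (v k - 1).val ≤ n - 1)) = univ := by
        apply Finset.eq_univ_of_card
        have hle := Finset.card_filter_le univ (fun k => (v k - 1).val ≤ n - 1)
        have hcard : (univ : Finset (Fin n)).card = n := by
          rw [Finset.card_univ, Fintype.card_fin]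
        have hftc : Fintype.card (Fin n) = n := Fintype.card_fin n
        omega
      intro k
      have hk : k ∈ univ.filter (fun k => (v k - 1).val ≤ n - 1) := by
        rw [h2]; exact mem_univ k
      rw [mem_filter] at hk
      have := (val_sub_one hn (v k) (show n - 1 < n by omega)).mp hk.2
      omega
    refine ⟨List.length_ofFn, ?_, ?_⟩
    · intro x hx
      rw [List.mem_ofFn] at hx
      obtain ⟨i, rfl⟩ := hx
      exact hall i
    · intro i hi1 hin
      have h1 := hQ (i - 1) (by omega)
      rw [lenfilter]
      have hsub : (univ.filter (fun k => (v k - 1).val ≤ i - 1))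
          ⊆ (univ.filter (fun k => decide ((v k).val ≤ i) = true)) := by
        intro k hk
        simp only [mem_filter, mem_univ, true_and, decide_eq_true_eq] at hk ⊢
        have := (val_sub_one hn (v k) (show i - 1 < n by omega)).mp hk
        omega
      have := Finset.card_le_card hsub
      omega

lemma exists_unique_shift (hn : 1 ≤ n) (w : Fin n → ZMod (n + 1)) :
    ∃! c : ZMod (n + 1), IsPFList n (List.ofFn fun i => (w i + c).val) := by
  set u : Fin n → ZMod (n + 1) := fun k => w k - 1 with hu
  have hcond : ∀ c : ZMod (n + 1),
      IsPFList n (List.ofFn fun i => (w i + c).val) ↔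
        ((-c).val < n + 1 ∧ ∀ s, 1 ≤ s → s ≤ n →
          Hfun u ((-c).val) ≤ Hfun u ((-c).val + s)) := by
    intro c
    rw [PF_iff hn (fun i => w i + c)]
    have hfc : ∀ t : ℕ, (univ.filter (fun k => ((w k + c) - 1).val ≤ t))
        = (univ.filter (fun k => (u k + c).val ≤ t)) := by
      intro t
      apply Finset.filter_congr
      intro k _
      have : w k + c - 1 = u k + c := by rw [hu]; ring
      rw [this]
    constructor
    · intro h
      refine ⟨ZMod.val_lt _, ?_⟩
      intro s hs1 hs2
      have := h (s - 1) (by omega)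
      rw [hfc, cnt_eq u c (s - 1) (by omega)] at this
      rw [show s - 1 + 1 = s by omega] at this
      rw [← wsum_le_iff]
      omega
    · rintro ⟨-, h⟩ t ht
      rw [hfc, cnt_eq u c t (by omega)]
      have := (wsum_le_iff u ((-c).val) (t + 1)).mpr (h (t + 1) (by omega) (by omega))
      omega
  obtain ⟨p₀, ⟨hp₀lt, hp₀R⟩, huniq⟩ := exists_unique_p u
  refine ⟨-(p₀ : ZMod (n + 1)), (hcond _).mpr ?_, ?_⟩
  · have hval : (-(-(p₀ : ZMod (n + 1)))).val = p₀ := by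
      rw [neg_neg, ZMod.val_cast_of_lt hp₀lt]
    rw [hval]
    exact ⟨hp₀lt, hp₀R⟩
  · intro c hc
    have hc2 := (hcond c).mp hc
    have := huniq ((-c).val) hc2
    have h2 : -c = (p₀ : ZMod (n + 1)) := by
      rw [← this, ZMod.natCast_val, ZMod.cast_id]
    rw [← h2, neg_neg]
end bridge
section pollak
open Finset

lemma repC_shift {n : ℕ} (w : Fin n → ZMod (n + 1)) (c : ZMod (n + 1)) :
    repC (List.ofFn fun k => w k + c) = repC (List.ofFn w) := by
  have h : (List.ofFn fun k => w k + c) = (List.ofFn w).map (· + c) := by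
    rw [List.map_ofFn]
    rfl
  rw [h]
  exact repC_map _ (add_left_injective c) _

lemma pollak_card {n : ℕ} (hn : 1 ≤ n) (j : ℕ) :
    Nat.card {w : Fin n → ZMod (n + 1) // repC (List.ofFn w) = j}
      = (n + 1) * Nat.card {w : Fin n → ZMod (n + 1) //
          IsPFList n (List.ofFn fun i => (w i).val) ∧ repC (List.ofFn w) = j} := by
  classical
  set Ψ : ZMod (n + 1) × {w : Fin n → ZMod (n + 1) //
      IsPFList n (List.ofFn fun i => (w i).val) ∧ repC (List.ofFn w) = j}
      → {w : Fin n → ZMod (n + 1) // repC (List.ofFn w) = j} :=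
    fun p => ⟨fun k => p.2.1 k + p.1, by rw [repC_shift]; exact p.2.2.2⟩ with hΨ
  have hbij : Function.Bijective Ψ := by
    constructor
    · rintro ⟨c, w, hw⟩ ⟨c', w', hw'⟩ h
      simp only [hΨ, Subtype.mk.injEq] at h
      have he : ∀ k, w k + c = w' k + c' := fun k => congrFun h k
      have heq : ∀ k, w k + (c - c') = w' k := by
        intro k
        have := he k
        linear_combination this
      have hPF' : IsPFList n (List.ofFn fun i => (w i + (c - c')).val) := by
        have : (fun i => (w i + (c - c')).val) = fun i => (w' i).val := by
          funext i; rw [heq i]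
        rw [this]
        exact hw'.1
      have hPF0 : IsPFList n (List.ofFn fun i => (w i + 0).val) := by
        have : (fun i => (w i + 0).val) = fun i => (w i).val := by
          funext i; rw [add_zero]
        rw [this]
        exact hw.1
      obtain ⟨d, -, hduniq⟩ := exists_unique_shift hn w
      have h1 := hduniq _ hPF'
      have h2 := hduniq _ hPF0
      have hcc : c = c' := by
        have : c - c' = 0 := by rw [h1, h2]
        linear_combination this
      subst hcc
      have hww : w = w' := by
        funext k
        have := he k
        exact add_right_cancel this
      subst hww
      rfl
    · rintro ⟨x, hx⟩
      obtain ⟨c₀, hc₀, -⟩ := exists_unique_shift hn x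
      refine ⟨⟨-c₀, ⟨fun k => x k + c₀, ?_, ?_⟩⟩, ?_⟩
      · exact hc₀
      · rw [repC_shift]; exact hx
      · apply Subtype.ext
        funext k
        simp [hΨ]
  rw [← Nat.card_congr (Equiv.ofBijective Ψ hbij), Nat.card_prod,
    Nat.card_eq_fintype_card (α := ZMod (n + 1)), ZMod.card]

theorem count_pf (n j : ℕ) (hn : 1 ≤ n) :
    Set.ncard {l : List ℕ | IsPFList n l ∧ repeatCount l = j}
      = (n - 1).choose j * n ^ (n - 1 - j) := by
  classical
  obtain ⟨M, rfl⟩ : ∃ M, n = M + 1 := ⟨n - 1, by omega⟩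
  simp only [Nat.add_sub_cancel]
  haveI : NeZero (M + 1 + 1) := ⟨by omega⟩
  set Φ : (Fin (M + 1) → ZMod (M + 2)) → List ℕ :=
    fun w => List.ofFn fun i => (w i).val with hΦ
  have hΦinj : Function.Injective Φ := by
    intro w w' h
    have := List.ofFn_injective h
    funext k
    exact ZMod.val_injective _ (congrFun this k)
  have hset : {l : List ℕ | IsPFList (M + 1) l ∧ repeatCount l = j}
      = Φ '' {w : Fin (M + 1) → ZMod (M + 2) |
          IsPFList (M + 1) (List.ofFn fun i => (w i).val) ∧ repC (List.ofFn w) = j} := by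
    ext l
    constructor
    · rintro ⟨hPF, hrep⟩
      have hlen : l.length = M + 1 := hPF.1
      have hub : ∀ idx : Fin l.length, l.get idx < M + 2 := by
        intro idx
        have hmem : l.get idx ∈ l := List.get_mem l idx
        have := (hPF.2.1 _ hmem).2
        omega
      set w : Fin (M + 1) → ZMod (M + 2) :=
        fun i => ((l.get (Fin.cast hlen.symm i) : ℕ) : ZMod (M + 2)) with hw
      have hΦw : Φ w = l := by
        apply List.ext_get
        · show (List.ofFn fun i => (w i).val).length = l.length
          rw [List.length_ofFn, hlen]
        · intro i h1 h2
          show (List.ofFn fun i => (w i).val).get ⟨i, h1⟩ = _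
          rw [List.get_ofFn]
          show ((l.get _ : ℕ) : ZMod (M + 2)).val = _
          rw [ZMod.val_cast_of_lt (hub _)]
          rfl
      have hval : (List.ofFn fun i => (w i).val) = Φ w := rfl
      refine ⟨w, ⟨?_, ?_⟩, hΦw⟩
      · rw [hval, hΦw]
        exact hPF
      · rw [show repC (List.ofFn w) = repC ((List.ofFn w).map ZMod.val) from
          (repC_map _ (ZMod.val_injective _) _).symm]
        have hmv : (List.ofFn w).map ZMod.val = Φ w := by
          rw [List.map_ofFn]; rfl
        rw [hmv, hΦw]
        exact hrep
    · rintro ⟨w, ⟨hPF, hrep⟩, rfl⟩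
      refine ⟨hPF, ?_⟩
      show repeatCount (List.ofFn fun i => (w i).val) = j
      rw [repeatCount_eq_repC]
      have hmv : (List.ofFn fun i => (w i).val) = (List.ofFn w).map ZMod.val := by
        rw [List.map_ofFn]; rfl
      rw [hmv, repC_map _ (ZMod.val_injective _) _]
      exact hrep
  rw [hset, Set.ncard_image_of_injective _ hΦinj, ← Nat.card_coe_set_eq]
  have hcard1 : Nat.card {w : Fin (M + 1) → ZMod (M + 2) // repC (List.ofFn w) = j}
      = (M + 2) * (M.choose j * (M + 1) ^ (M - j)) := by
    rw [Nat.card_eq_fintype_card]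
    have he : {w : Fin (M + 1) → ZMod (M + 2) // repC (List.ofFn w) = j}
        ≃ {w : Fin (M + 1) → ZMod (M + 2) // repCF w = j} :=
      Equiv.subtypeEquivRight (fun w => by rw [repC_ofFn]; exact Iff.rfl)
    rw [Fintype.card_congr he, card_rep M j, ZMod.card]
    norm_num
  have hcard2 := pollak_card (n := M + 1) (by omega) j
  have h2 : (M + 2) * Nat.card {w : Fin (M + 1) → ZMod (M + 2) //
      IsPFList (M + 1) (List.ofFn fun i => (w i).val) ∧ repC (List.ofFn w) = j}
      = (M + 2) * (M.choose j * (M + 1) ^ (M - j)) := by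
    rw [← hcard1]
    exact hcard2.symm
  have hfinal : Nat.card {w : Fin (M + 1) → ZMod (M + 2) //
      IsPFList (M + 1) (List.ofFn fun i => (w i).val) ∧ repC (List.ofFn w) = j}
      = M.choose j * (M + 1) ^ (M - j) := by
    have hpos : 0 < M + 2 := Nat.succ_pos (M + 1)
    exact Nat.eq_of_mul_eq_mul_left hpos h2
  exact hfinal
end pollak
section analysis
open Filter Real Finset

lemma prod_desc (m j : ℕ) :
    ((m.choose j : ℝ)) * (j.factorial : ℝ) = ∏ i ∈ Finset.range j, ((m - i : ℕ) : ℝ) := by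
  rw [← Nat.cast_mul, mul_comm, ← Nat.descFactorial_eq_factorial_mul_choose,
    Nat.descFactorial_eq_prod_range, Nat.cast_prod]

lemma tendsto_inv_expfac (j : ℕ) :
    Filter.Tendsto (fun m : ℕ => ((m.choose j : ℝ) * ((m : ℝ) + 1) ^ (m - j)) / ((m : ℝ) + 2) ^ m)
      Filter.atTop (nhds (1 / (Real.exp 1 * (j.factorial : ℝ)))) := by
  have hzero : Filter.Tendsto (fun m : ℕ => 1 / ((m : ℝ) + 1)) Filter.atTop (nhds 0) :=
    tendsto_one_div_add_atTop_nhds_zero_nat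
  have h2 : Filter.Tendsto (fun m : ℕ => 1 + 1 / ((m : ℝ) + 1)) Filter.atTop (nhds 1) := by
    have := hzero.const_add (1 : ℝ)
    simpa using this
  have h1 : Filter.Tendsto (fun m : ℕ => (1 + 1 / ((m : ℝ) + 1)) ^ (m + 1))
      Filter.atTop (nhds (Real.exp 1)) := by
    have hb := (Real.tendsto_one_add_div_pow_exp (1 : ℝ)).comp (Filter.tendsto_add_atTop_nat 1)
    apply hb.congr
    intro m
    push_cast
    norm_num
  -- factor 2
  have hexp_ne : Real.exp 1 ≠ 0 := (Real.exp_pos 1).ne'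
  have hF2 : Filter.Tendsto (fun m : ℕ => (((m : ℝ) + 1) / ((m : ℝ) + 2)) ^ m)
      Filter.atTop (nhds (1 / Real.exp 1)) := by
    have hq := h2.div h1 hexp_ne
    apply hq.congr
    intro m
    simp only [Pi.div_apply]
    have hm1 : ((m : ℝ) + 1) ≠ 0 := by positivity
    have hm2 : ((m : ℝ) + 2) ≠ 0 := by positivity
    have h3 : (1 + 1 / ((m : ℝ) + 1)) = ((m : ℝ) + 2) / ((m : ℝ) + 1) := by
      field_simp
      ring
    rw [h3, div_pow, div_pow, pow_succ]
    field_simp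
    ring
  -- factor 1
  have hF1 : Filter.Tendsto (fun m : ℕ => (m.choose j : ℝ) / ((m : ℝ) + 1) ^ j)
      Filter.atTop (nhds (1 / (j.factorial : ℝ))) := by
    have hterm : ∀ i : ℕ, Filter.Tendsto (fun m : ℕ => ((m - i : ℕ) : ℝ) / ((m : ℝ) + 1))
        Filter.atTop (nhds 1) := by
      intro i
      have hbase : Filter.Tendsto (fun m : ℕ => 1 - ((i : ℝ) + 1) * (1 / ((m : ℝ) + 1)))
          Filter.atTop (nhds 1) := by
        have := (hzero.const_mul ((i : ℝ) + 1)).const_sub (1 : ℝ)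
        simpa using this
      apply hbase.congr'
      filter_upwards [Filter.eventually_ge_atTop i] with m hm
      have hm1 : ((m : ℝ) + 1) ≠ 0 := by positivity
      have hcast : ((m - i : ℕ) : ℝ) = (m : ℝ) - (i : ℝ) := by
        push_cast [Nat.cast_sub hm]
        ring
      rw [hcast]
      field_simp
      ring
    have hprod : Filter.Tendsto (fun m : ℕ => ∏ i ∈ Finset.range j,
        (((m - i : ℕ) : ℝ) / ((m : ℝ) + 1))) Filter.atTop (nhds 1) := by
      have := tendsto_finset_prod (Finset.range j)
        (fun i _ => hterm i)
      simpa using this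
    have := hprod.div_const (j.factorial : ℝ)
    rw [one_div] at this ⊢
    apply this.congr
    intro m
    have hm1 : ((m : ℝ) + 1) ≠ 0 := by positivity
    have hfac : (j.factorial : ℝ) ≠ 0 := by
      exact_mod_cast j.factorial_ne_zero
    rw [Finset.prod_div_distrib, Finset.prod_const, Finset.card_range, ← prod_desc]
    field_simp
  have hmul := hF1.mul hF2
  have hlim : (1 / (j.factorial : ℝ)) * (1 / Real.exp 1)
      = 1 / (Real.exp 1 * (j.factorial : ℝ)) := by
    rw [div_mul_div_comm, one_mul, mul_comm]
  rw [hlim] at hmul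
  apply hmul.congr'
  filter_upwards [Filter.eventually_ge_atTop j] with m hm
  have hm1 : ((m : ℝ) + 1) ≠ 0 := by positivity
  have hm2 : ((m : ℝ) + 2) ≠ 0 := by positivity
  have hpow : ((m : ℝ) + 1) ^ j * ((m : ℝ) + 1) ^ (m - j) = ((m : ℝ) + 1) ^ m := by
    rw [← pow_add]
    congr 1
    omega
  have hne : ((m : ℝ) + 1) ^ j ≠ 0 := by positivity
  have hne2 : ((m : ℝ) + 2) ^ m ≠ 0 := by positivity
  rw [div_pow, div_mul_div_comm, ← hpow]
  field_simp
end analysis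
theorem stmt14 (j : ℕ) :
    Filter.Tendsto
      (fun n : ℕ =>
        (Set.ncard {l : List ℕ | IsPFList n l ∧ repeatCount l = j} : ℝ) /
          ((n : ℝ) + 1) ^ (n - 1))
      Filter.atTop (nhds (1 / (Real.exp 1 * (Nat.factorial j : ℝ)))) := by
  rw [← Filter.tendsto_add_atTop_iff_nat 1]
  apply (tendsto_inv_expfac j).congr
  intro m
  rw [count_pf (m + 1) j (by omega)]
  simp only [Nat.add_sub_cancel]
  push_cast
  norm_num
  ring_nf
end
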